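/- arXiv:1508.05364 — 2 statements merged into one kernel-verified Lean document; each statement's English description precedes it below -/
import Mathlib

section
/- Discrete Intermediate Value Theorem: Let D = (V,E) be a finite directed graph with no directed cycles, exactly one minimal vertex p and exactly one maximal vertex b, and let f: V → ℤ satisfy f(p) ≤ f(b) and |f(x) - f(y)| ≤ 1 for every arc (x,y) ∈ E. Then every integer r with f(p) ≤ r ≤ f(b) lies in the image of f. -/
open scoped Classical

/-- A finite multigraph: loops and parallel edges allowed. -/
structure Multigraph where
  V : Type
  E : Type
  [fintypeV : Fintype V]
  [fintypeE : Fintype E]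
  ends : E → Sym2 V

attribute [instance] Multigraph.fintypeV Multigraph.fintypeE

namespace Multigraph

variable (G : Multigraph)

/-- Vertex support of an edge set: vertices incident to some edge of `X`. -/
noncomputable def supp (X : Finset G.E) : Finset G.V :=
  Finset.univ.filter (fun v => ∃ e ∈ X, v ∈ G.ends e)

/-- `Δ` of the subgraph induced by the edge set `X`. -/
noncomputable def delta (X : Finset G.E) : ℤ := (X.card : ℤ) - (G.supp X).card

/-- `Δ(G) = |E(G)| - |V(G)|`. -/
noncomputable def deltaG : ℤ := (Fintype.card G.E : ℤ) - (Fintype.card G.V : ℤ)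

/-- Degree of `v` in the edge set `X`: loops count twice. -/
noncomputable def degIn (X : Finset G.E) (v : G.V) : ℕ :=
  ∑ e ∈ X, (if G.ends e = s(v, v) then 2 else if v ∈ G.ends e then 1 else 0)

/-- `u` and `v` are joined by an edge of `X`. -/
def adjIn (X : Finset G.E) (u v : G.V) : Prop := ∃ e ∈ X, G.ends e = s(u, v)

/-- Reachability using only edges of `X`. -/
def reachIn (X : Finset G.E) : G.V → G.V → Prop :=
  Relation.ReflTransGen (G.adjIn X)

/-- The edge set `X` induces a connected subgraph. -/
def ConnSet (X : Finset G.E) : Prop :=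
  X.Nonempty ∧ ∀ u ∈ G.supp X, ∀ v ∈ G.supp X, G.reachIn X u v

/-- Edges of the component of the subgraph `(V, X)` containing vertex `v`. -/
noncomputable def compEdges (X : Finset G.E) (v : G.V) : Finset G.E :=
  X.filter (fun f => ∃ u ∈ G.ends f, G.reachIn X v u)

/-- Vertices of the component of `v` in the graph `(V, X)` (all vertices kept). -/
noncomputable def compVerts (X : Finset G.E) (v : G.V) : Finset G.V :=
  Finset.univ.filter (fun u => G.reachIn X v u)

/-- `C` is (the edge set of) a cycle: connected, every vertex of degree 2. -/
def IsCycleSet (C : Finset G.E) : Prop :=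
  G.ConnSet C ∧ ∀ v ∈ G.supp C, G.degIn C v = 2

/-- `T` induces a tree. -/
def IsTreeSet (T : Finset G.E) : Prop := G.ConnSet T ∧ G.delta T = -1

/-- The component of `v` in `(V, X)` is a tree (possibly a single vertex). -/
def IsTreeCompAt (X : Finset G.E) (v : G.V) : Prop :=
  (G.compEdges X v).card + 1 = (G.compVerts X v).card

/-- The number of tree components of the graph `(V, X)`. -/
noncomputable def treeCount (X : Finset G.E) : ℕ :=
  (((Finset.univ : Finset G.V).filter (fun v => G.IsTreeCompAt X v)).image
    (fun v => G.compVerts X v)).card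

/-- The graph `G` has no isolated vertices. -/
def NoIso : Prop := ∀ v : G.V, ∃ e : G.E, v ∈ G.ends e

/-- The graph `G` has no leaves. -/
def NoLeaf : Prop := ∀ v : G.V, G.degIn Finset.univ v ≠ 1

/-- The graph `G` is connected. -/
def GConn : Prop := Nonempty G.V ∧ ∀ u v : G.V, G.reachIn Finset.univ u v

/-- `G` is a bicycle: connected, leafless, with `Δ(G) = 1`. -/
def IsBicycle : Prop := G.GConn ∧ G.NoLeaf ∧ G.deltaG = 1

/-- One round of deleting all edges incident to a leaf. -/
noncomputable def pruneStep (X : Finset G.E) : Finset G.E :=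
  X.filter (fun e => ∀ v ∈ G.ends e, G.degIn X v ≠ 1)

/-- Edge set obtained from `G` by repeatedly deleting leaves until none remain. -/
noncomputable def kernelSet : Finset G.E :=
  G.pruneStep^[Fintype.card G.E] Finset.univ

/-- `Δ` of the component of `G` containing `v`. -/
noncomputable def compDelta (v : G.V) : ℤ :=
  ((G.compEdges Finset.univ v).card : ℤ) - ((G.compVerts Finset.univ v).card : ℤ)

/-- The core `[G]`: union of the kernels of the components `A` with `Δ(A) ≥ 1`. -/
noncomputable def coreSet : Finset G.E :=
  G.kernelSet.filter (fun e => ∀ v ∈ G.ends e, 1 ≤ G.compDelta v)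

/-- `P` is the edge set of an `(x,y)`-path. -/
def IsPathSet (P : Finset G.E) (x y : G.V) : Prop :=
  G.ConnSet P ∧ x ≠ y ∧ x ∈ G.supp P ∧ y ∈ G.supp P ∧
  G.degIn P x = 1 ∧ G.degIn P y = 1 ∧
  ∀ v ∈ G.supp P, v ≠ x → v ≠ y → G.degIn P v = 2

/-- `C` induces a bicycle subgraph: connected, leafless, `Δ = 1`. -/
def IsBicycleSet (C : Finset G.E) : Prop :=
  G.ConnSet C ∧ (∀ v ∈ G.supp C, G.degIn C v ≠ 1) ∧ G.delta C = 1

/-- Circuits of the `k`-circular matroid `M_k(G)`: minimal nonempty edge sets `C`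
with `|C| = |V(G⟨C⟩)| + k`, i.e. `Δ(G⟨C⟩) = k`. -/
def IsCircuitSet (k : ℕ) (C : Finset G.E) : Prop :=
  (C.Nonempty ∧ G.delta C = (k : ℤ)) ∧
  ∀ D ⊂ C, ¬ (D.Nonempty ∧ G.delta D = (k : ℤ))

/-- Independent sets of `M_k(G)`. -/
def Indep (k : ℕ) (I : Finset G.E) : Prop := ∀ C ⊆ I, ¬ G.IsCircuitSet k C

/-- Bases of `M_k(G)`: maximal independent sets. -/
def IsBase (k : ℕ) (B : Finset G.E) : Prop :=
  G.Indep k B ∧ ∀ B' : Finset G.E, G.Indep k B' → B ⊆ B' → B' = B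

/-- The matroid `M_k(G)` is connected: at least two elements and every two
elements lie on a common circuit. -/
def MConn (k : ℕ) : Prop :=
  2 ≤ Fintype.card G.E ∧
  ∀ a b : G.E, ∃ C : Finset G.E, G.IsCircuitSet k C ∧ a ∈ C ∧ b ∈ C

end Multigraph

/-- Discrete Intermediate Value Theorem for acyclic digraphs with a unique
minimal vertex `p` and unique maximal vertex `b`. -/
theorem stmt_4 {V : Type} [Fintype V] [Nonempty V] (E : V → V → Prop)
    (hirr : ∀ x, ¬ E x x)
    (hacyc : ∀ v, ¬ Relation.TransGen E v v)
    (p b : V)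
    (hpmin : ∀ x, ¬ E x p) (hpuniq : ∀ v, (∀ x, ¬ E x v) → v = p)
    (hbmax : ∀ x, ¬ E b x) (hbuniq : ∀ v, (∀ x, ¬ E v x) → v = b)
    (f : V → ℤ) (hfpb : f p ≤ f b)
    (hstep : ∀ x y, E x y → |f x - f y| ≤ 1) :
    ∀ r : ℤ, f p ≤ r → r ≤ f b → ∃ v, f v = r := by
  intro r hpr hrb
  by_contra hno
  push_neg at hno
  -- crossing lemma: no arc connects {f < r} with {f > r}
  have cross : ∀ x y, E x y → (f x < r ↔ f y < r) := by
    intro x y hxy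
    have h1 := abs_le.mp (hstep x y hxy)
    have hx := hno x
    have hy := hno y
    omega
  -- well-foundedness of reverse transitive closure
  have htrans : IsTrans V (fun a b => Relation.TransGen E b a) :=
    ⟨fun a b c h1 h2 => h2.trans h1⟩
  have hirr' : IsIrrefl V (fun a b => Relation.TransGen E b a) :=
    ⟨fun a h => hacyc a h⟩
  have wf : WellFounded (fun a b => Relation.TransGen E b a) :=
    Finite.wellFounded_of_trans_of_irrefl _
  have hpS : f p < r := lt_of_le_of_ne hpr (hno p)
  obtain ⟨v, hv, hmin⟩ := wf.has_min {v | f v < r} ⟨p, hpS⟩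
  -- v has no successor at all
  have hvmax : ∀ x, ¬ E v x := by
    intro x hvx
    have hxS : f x < r := (cross v x hvx).mp hv
    exact hmin x hxS (Relation.TransGen.single hvx)
  have hvb : v = b := hbuniq v hvmax
  have : r ≤ f v := hvb ▸ hrb
  exact absurd hv (not_lt.mpr this)
end

section
/- A graph D is a bicycle (i.e., a connected graph with no leaves and Δ(D) = 1) if and only if D is a Θ-graph, a dumbbell, or a butterfly. -/
open scoped Classical

namespace Multigraph

variable (G : Multigraph)

/-- `G` is a `Θ`-graph: two vertices joined by three internally disjoint paths. -/
def IsTheta : Prop :=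
  G.NoIso ∧ ∃ (x y : G.V) (P₁ P₂ P₃ : Finset G.E),
    G.IsPathSet P₁ x y ∧ G.IsPathSet P₂ x y ∧ G.IsPathSet P₃ x y ∧
    P₁ ∪ P₂ ∪ P₃ = Finset.univ ∧
    Disjoint P₁ P₂ ∧ Disjoint P₁ P₃ ∧ Disjoint P₂ P₃ ∧
    G.supp P₁ ∩ G.supp P₂ = {x, y} ∧ G.supp P₁ ∩ G.supp P₃ = {x, y} ∧
    G.supp P₂ ∩ G.supp P₃ = {x, y}

/-- `G` is a butterfly: two cycles sharing exactly one vertex. -/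
def IsButterfly : Prop :=
  G.NoIso ∧ ∃ (C₁ C₂ : Finset G.E) (x : G.V),
    G.IsCycleSet C₁ ∧ G.IsCycleSet C₂ ∧ Disjoint C₁ C₂ ∧
    C₁ ∪ C₂ = Finset.univ ∧ G.supp C₁ ∩ G.supp C₂ = {x}

/-- `G` is a dumbbell: two vertex-disjoint cycles joined by a path meeting
each cycle in exactly one endpoint. -/
def IsDumbbell : Prop :=
  G.NoIso ∧ ∃ (C₁ C₂ P : Finset G.E) (x y : G.V),
    G.IsCycleSet C₁ ∧ G.IsCycleSet C₂ ∧ G.IsPathSet P x y ∧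
    Disjoint C₁ C₂ ∧ Disjoint C₁ P ∧ Disjoint C₂ P ∧
    C₁ ∪ C₂ ∪ P = Finset.univ ∧
    G.supp C₁ ∩ G.supp C₂ = ∅ ∧
    G.supp C₁ ∩ G.supp P = {x} ∧ G.supp C₂ ∩ G.supp P = {y}

end Multigraph

namespace Multigraph

variable {G : Multigraph}

/-- Contribution of edge `e` to the degree of `v`. -/
noncomputable def cnt (G : Multigraph) (e : G.E) (v : G.V) : ℕ :=
  if G.ends e = s(v, v) then 2 else if v ∈ G.ends e then 1 else 0

lemma degIn_eq_sum_cnt (X : Finset G.E) (v : G.V) :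
    G.degIn X v = ∑ e ∈ X, G.cnt e v := rfl

lemma ends_rep (e : G.E) : ∃ a b, G.ends e = s(a, b) :=
  Sym2.inductionOn (G.ends e) (fun a b => ⟨a, b, rfl⟩)

lemma sym2_eq {α : Type*} {z : Sym2 α} {a b : α} (ha : a ∈ z) (hb : b ∈ z)
    (hne : a ≠ b) : z = s(a, b) := by
  induction z using Sym2.inductionOn with
  | _ x y =>
    rw [Sym2.mem_iff] at ha hb
    rw [Sym2.eq_iff]
    rcases ha with rfl | rfl <;> rcases hb with rfl | rfl <;> tauto

lemma cnt_eq_zero {e : G.E} {v : G.V} (h : v ∉ G.ends e) : G.cnt e v = 0 := by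
  unfold cnt
  rw [if_neg, if_neg h]
  intro hc
  exact h (by rw [hc]; exact Sym2.mem_mk_left v v)

lemma cnt_pos {e : G.E} {v : G.V} (h : v ∈ G.ends e) : 1 ≤ G.cnt e v := by
  unfold cnt
  by_cases h2 : G.ends e = s(v, v)
  · rw [if_pos h2]; omega
  · rw [if_neg h2, if_pos h]

lemma cnt_loop {e : G.E} {v : G.V} (h : G.ends e = s(v, v)) : G.cnt e v = 2 := by
  unfold cnt; rw [if_pos h]

lemma cnt_nonloop {e : G.E} {a b v : G.V} (h : G.ends e = s(a, b)) (hab : a ≠ b) :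
    G.cnt e v = if v = a ∨ v = b then 1 else 0 := by
  unfold cnt
  rw [if_neg]
  · simp only [h, Sym2.mem_iff]
  · rw [h, Sym2.eq_iff]
    rintro (⟨rfl, rfl⟩ | ⟨rfl, rfl⟩) <;> exact hab rfl

lemma sum_cnt_mem {S : Finset G.V} {e : G.E} (h : ∀ u ∈ G.ends e, u ∈ S) :
    ∑ v ∈ S, G.cnt e v = 2 := by
  obtain ⟨a, b, hab⟩ := G.ends_rep e
  by_cases hab' : a = b
  · subst hab'
    have ha : a ∈ S := h a (by rw [hab]; exact Sym2.mem_mk_left a a)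
    have : ∀ v ∈ S, G.cnt e v = if v = a then 2 else 0 := by
      intro v _
      unfold cnt
      by_cases hv : v = a
      · subst hv; rw [if_pos hab, if_pos rfl]
      · rw [if_neg, if_neg, if_neg hv]
        · rw [hab, Sym2.mem_iff]; tauto
        · rw [hab, Sym2.eq_iff]; tauto
    rw [Finset.sum_congr rfl this, Finset.sum_ite_eq' S a (fun _ => 2), if_pos ha]
  · have ha : a ∈ S := h a (by rw [hab]; exact Sym2.mem_mk_left a b)
    have hb : b ∈ S := h b (by rw [hab]; exact Sym2.mem_mk_right a b)
    have : ∀ v ∈ S, G.cnt e v =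
        (if v = a then 1 else 0) + (if v = b then 1 else 0) := by
      intro v _
      rw [G.cnt_nonloop hab hab']
      by_cases hv : v = a
      · subst hv; rw [if_pos (Or.inl rfl), if_pos rfl, if_neg hab']
      · by_cases hv' : v = b
        · subst hv'; rw [if_pos (Or.inr rfl), if_neg hv, if_pos rfl]
        · rw [if_neg (by tauto), if_neg hv, if_neg hv']
    rw [Finset.sum_congr rfl this, Finset.sum_add_distrib,
      Finset.sum_ite_eq' S a (fun _ => 1), Finset.sum_ite_eq' S b (fun _ => 1),
      if_pos ha, if_pos hb]

lemma sum_cnt_not_mem {S : Finset G.V} {e : G.E} (h : ∀ u ∈ G.ends e, u ∉ S) :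
    ∑ v ∈ S, G.cnt e v = 0 := by
  apply Finset.sum_eq_zero
  intro v hv
  exact G.cnt_eq_zero (fun hc => h v hc hv)

/-- Local handshake: if `S` is closed under `X`-edges, the sum of degrees over `S`
is twice the number of edges meeting `S`. -/
lemma sum_degIn (X : Finset G.E) (S : Finset G.V)
    (hcl : ∀ e ∈ X, (∃ u ∈ G.ends e, u ∈ S) → ∀ u ∈ G.ends e, u ∈ S) :
    ∑ v ∈ S, G.degIn X v = 2 * (X.filter (fun e => ∃ u ∈ G.ends e, u ∈ S)).card := by
  simp only [degIn_eq_sum_cnt]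
  rw [Finset.sum_comm]
  have : ∀ e ∈ X, ∑ v ∈ S, G.cnt e v =
      if (∃ u ∈ G.ends e, u ∈ S) then 2 else 0 := by
    intro e he
    by_cases h : ∃ u ∈ G.ends e, u ∈ S
    · rw [if_pos h]; exact G.sum_cnt_mem (hcl e he h)
    · rw [if_neg h]
      exact G.sum_cnt_not_mem (fun u hu hS => h ⟨u, hu, hS⟩)
  rw [Finset.sum_congr rfl this, Finset.sum_ite, Finset.sum_const, Finset.sum_const]
  simp [mul_comm]

lemma mem_supp_iff {X : Finset G.E} {v : G.V} :
    v ∈ G.supp X ↔ ∃ e ∈ X, v ∈ G.ends e := by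
  simp [supp]

lemma supp_union {A B : Finset G.E} : G.supp (A ∪ B) = G.supp A ∪ G.supp B := by
  ext v
  simp only [mem_supp_iff, Finset.mem_union]
  constructor
  · rintro ⟨e, he | he, hv⟩
    · exact Or.inl ⟨e, he, hv⟩
    · exact Or.inr ⟨e, he, hv⟩
  · rintro (⟨e, he, hv⟩ | ⟨e, he, hv⟩)
    · exact ⟨e, Or.inl he, hv⟩
    · exact ⟨e, Or.inr he, hv⟩

lemma degIn_eq_zero {X : Finset G.E} {v : G.V} (h : v ∉ G.supp X) :
    G.degIn X v = 0 := by
  rw [degIn_eq_sum_cnt]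
  apply Finset.sum_eq_zero
  intro e he
  exact G.cnt_eq_zero (fun hc => h (mem_supp_iff.2 ⟨e, he, hc⟩))

lemma one_le_degIn {X : Finset G.E} {v : G.V} (h : v ∈ G.supp X) :
    1 ≤ G.degIn X v := by
  obtain ⟨e, he, hv⟩ := mem_supp_iff.1 h
  calc 1 ≤ G.cnt e v := G.cnt_pos hv
    _ ≤ _ := Finset.single_le_sum (f := fun e => G.cnt e v) (fun _ _ => Nat.zero_le _) he

lemma degIn_union {A B : Finset G.E} (h : Disjoint A B) (v : G.V) :
    G.degIn (A ∪ B) v = G.degIn A v + G.degIn B v := by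
  simp only [degIn_eq_sum_cnt]
  exact Finset.sum_union h

lemma adjIn_symm {X : Finset G.E} {u v : G.V} (h : G.adjIn X u v) : G.adjIn X v u := by
  obtain ⟨e, he, hends⟩ := h
  exact ⟨e, he, by rw [hends]; exact Sym2.eq_swap⟩

lemma reachIn_symm {X : Finset G.E} {u v : G.V} (h : G.reachIn X u v) :
    G.reachIn X v u := by
  induction h with
  | refl => exact Relation.ReflTransGen.refl
  | tail _ h2 ih =>
      exact Relation.ReflTransGen.trans
        (Relation.ReflTransGen.single (G.adjIn_symm h2)) ih

lemma reachIn_trans {X : Finset G.E} {u v w : G.V} (h1 : G.reachIn X u v)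
    (h2 : G.reachIn X v w) : G.reachIn X u w := Relation.ReflTransGen.trans h1 h2

lemma reachIn_mono {X X' : Finset G.E} (h : X ⊆ X') {u v : G.V}
    (hr : G.reachIn X u v) : G.reachIn X' u v := by
  unfold reachIn at hr ⊢
  refine Relation.ReflTransGen.mono ?_ u v hr
  rintro a b ⟨e, he, hends⟩
  exact ⟨e, h he, hends⟩

lemma reachIn_mem_supp {X : Finset G.E} {u v : G.V} (h : G.reachIn X v u) :
    u = v ∨ u ∈ G.supp X := by
  induction h with
  | refl => exact Or.inl rfl
  | tail _ h2 _ =>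
    obtain ⟨e, he, hends⟩ := h2
    exact Or.inr (mem_supp_iff.2 ⟨e, he, by rw [hends]; exact Sym2.mem_mk_right _ _⟩)

lemma mem_compVerts {X : Finset G.E} {u v : G.V} :
    u ∈ G.compVerts X v ↔ G.reachIn X v u := by
  simp [compVerts]

lemma mem_compEdges {X : Finset G.E} {e : G.E} {v : G.V} :
    e ∈ G.compEdges X v ↔ e ∈ X ∧ ∃ u ∈ G.ends e, G.reachIn X v u := by
  simp [compEdges]

lemma compVerts_congr {X : Finset G.E} {u v : G.V} (h : G.reachIn X v u) :
    G.compVerts X v = G.compVerts X u := by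
  ext w
  simp only [mem_compVerts]
  exact ⟨fun h2 => G.reachIn_trans (G.reachIn_symm h) h2, fun h2 => G.reachIn_trans h h2⟩

lemma compEdges_congr {X : Finset G.E} {u v : G.V}
    (h : G.compVerts X v = G.compVerts X u) : G.compEdges X v = G.compEdges X u := by
  ext e
  simp only [mem_compEdges]
  constructor <;> rintro ⟨he, w, hw, hr⟩
  · exact ⟨he, w, hw, mem_compVerts.1 (h ▸ mem_compVerts.2 hr)⟩
  · exact ⟨he, w, hw, mem_compVerts.1 (h.symm ▸ mem_compVerts.2 hr)⟩

lemma reachIn_compEdges {X : Finset G.E} {u v : G.V} (h : G.reachIn X v u) :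
    G.reachIn (G.compEdges X v) v u := by
  induction h with
  | refl => exact Relation.ReflTransGen.refl
  | tail h1 h2 ih =>
    obtain ⟨e, he, hends⟩ := h2
    refine ih.tail ⟨e, mem_compEdges.2 ⟨he, ?_⟩, hends⟩
    exact ⟨_, by rw [hends]; exact Sym2.mem_mk_left _ _, h1⟩

lemma ends_subset_compVerts {X : Finset G.E} {e : G.E} {v : G.V}
    (he : e ∈ G.compEdges X v) : ∀ u ∈ G.ends e, u ∈ G.compVerts X v := by
  obtain ⟨heX, u0, hu0, hr⟩ := mem_compEdges.1 he
  intro u hu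
  by_cases huu : u = u0
  · subst huu; exact mem_compVerts.2 hr
  · refine mem_compVerts.2 (hr.tail ⟨e, heX, ?_⟩)
    exact sym2_eq hu0 hu (fun h => huu h.symm)

lemma supp_compEdges_subset {X : Finset G.E} {v : G.V} :
    G.supp (G.compEdges X v) ⊆ G.compVerts X v := by
  intro u hu
  obtain ⟨e, he, hv⟩ := mem_supp_iff.1 hu
  exact G.ends_subset_compVerts he u hv

lemma degIn_compEdges {X : Finset G.E} {u v : G.V} (h : u ∈ G.compVerts X v) :
    G.degIn (G.compEdges X v) u = G.degIn X u := by
  simp only [degIn_eq_sum_cnt]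
  refine Finset.sum_subset (Finset.filter_subset _ _) ?_
  intro e he hne
  refine G.cnt_eq_zero (fun hc => hne (mem_compEdges.2 ⟨he, u, hc, mem_compVerts.1 h⟩))

end Multigraph
namespace Multigraph

variable {G : Multigraph}

/-- Reachability in exactly `n` steps. -/
def reachN (G : Multigraph) (X : Finset G.E) : ℕ → G.V → G.V → Prop
  | 0, u, v => u = v
  | (n+1), u, v => ∃ w, G.reachN X n u w ∧ G.adjIn X w v

lemma reachIn_iff_reachN {X : Finset G.E} {u v : G.V} :
    G.reachIn X u v ↔ ∃ n, G.reachN X n u v := by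
  constructor
  · intro h
    induction h with
    | refl => exact ⟨0, rfl⟩
    | tail _ h2 ih =>
      obtain ⟨n, hn⟩ := ih
      exact ⟨n + 1, _, hn, h2⟩
  · rintro ⟨n, hn⟩
    induction n generalizing v with
    | zero => cases hn; exact Relation.ReflTransGen.refl
    | succ n ih =>
      obtain ⟨w, hw, hadj⟩ := hn
      exact (ih hw).tail hadj

/-- A connected edge set spans at most one more vertex than it has edges. -/
lemma card_supp_le {X : Finset G.E} (h : G.ConnSet X) :
    (G.supp X).card ≤ X.card + 1 := by
  obtain ⟨⟨e0, he0⟩, hconn⟩ := h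
  obtain ⟨a, b, hab⟩ := G.ends_rep e0
  have hr : a ∈ G.supp X :=
    mem_supp_iff.2 ⟨e0, he0, by rw [hab]; exact Sym2.mem_mk_left a b⟩
  set r := a with hrdef
  classical
  let d : G.V → ℕ := fun v => if h : ∃ n, G.reachN X n r v then Nat.find h else 0
  have key : ∀ v ∈ G.supp X, v ≠ r →
      ∃ e ∈ X, ∃ w, G.ends e = s(w, v) ∧ d w < d v := by
    intro v hv hvr
    have hreach : G.reachIn X r v := hconn r hr v hv
    have hex : ∃ n, G.reachN X n r v := reachIn_iff_reachN.1 hreach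
    have hdv : d v = Nat.find hex := by simp only [d, dif_pos hex]
    have hspec : G.reachN X (Nat.find hex) r v := Nat.find_spec hex
    have hne : Nat.find hex ≠ 0 := by
      intro h0
      rw [h0] at hspec
      exact hvr hspec.symm
    obtain ⟨m, hm⟩ : ∃ m, Nat.find hex = m + 1 := ⟨_, (Nat.succ_pred_eq_of_pos (Nat.pos_of_ne_zero hne)).symm⟩
    rw [hm] at hspec
    obtain ⟨w, hwm, e, he, hends⟩ := hspec
    refine ⟨e, he, w, hends, ?_⟩
    have hexw : ∃ n, G.reachN X n r w := ⟨m, hwm⟩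
    have : d w ≤ m := by
      simp only [d, dif_pos hexw]
      exact Nat.find_min' hexw hwm
    omega
  let F : G.V → G.E := fun v =>
    if h : v ∈ G.supp X ∧ v ≠ r then (key v h.1 h.2).choose else e0
  have hF : ∀ v ∈ (G.supp X).erase r, F v ∈ X ∧
      ∃ w, G.ends (F v) = s(w, v) ∧ d w < d v := by
    intro v hv
    rw [Finset.mem_erase] at hv
    have h' : v ∈ G.supp X ∧ v ≠ r := ⟨hv.2, hv.1⟩
    simp only [F, dif_pos h']
    obtain ⟨h1, h2⟩ := (key v h'.1 h'.2).choose_spec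
    exact ⟨h1, h2⟩
  have hinj : Set.InjOn F ((G.supp X).erase r) := by
    intro v1 hv1 v2 hv2 heq
    by_contra hne
    obtain ⟨_, w1, hw1, hd1⟩ := hF v1 hv1
    obtain ⟨_, w2, hw2, hd2⟩ := hF v2 hv2
    rw [heq] at hw1
    rw [hw1, Sym2.eq_iff] at hw2
    rcases hw2 with ⟨_, h⟩ | ⟨rfl, rfl⟩
    · exact hne h
    · omega
  have hcard : ((G.supp X).erase r).card ≤ X.card := by
    apply Finset.card_le_card_of_injOn F (fun v hv => (hF v hv).1) hinj
  rw [Finset.card_erase_of_mem hr] at hcard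
  omega

/-- If a sum of naturals is 2, either one term is 2 or two terms are 1. -/
lemma sum_eq_two {α : Type*} [DecidableEq α] {s : Finset α} {f : α → ℕ}
    (h : ∑ v ∈ s, f v = 2) :
    (∃ x ∈ s, f x = 2 ∧ ∀ y ∈ s, y ≠ x → f y = 0) ∨
    (∃ x ∈ s, ∃ y ∈ s, x ≠ y ∧ f x = 1 ∧ f y = 1 ∧
      ∀ z ∈ s, z ≠ x → z ≠ y → f z = 0) := by
  have hex : ∃ x ∈ s, f x ≠ 0 := by
    by_contra hc
    push_neg at hc
    rw [Finset.sum_eq_zero hc] at h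
    omega
  obtain ⟨x, hx, hfx⟩ := hex
  have hsplit : f x + ∑ v ∈ s.erase x, f v = 2 := by
    rw [Finset.add_sum_erase s f hx]; exact h
  have hfx2 : f x ≤ 2 := by omega
  rcases Nat.lt_or_ge (f x) 2 with h1 | h2
  · -- f x = 1
    have hfx1 : f x = 1 := by omega
    have hrest : ∑ v ∈ s.erase x, f v = 1 := by omega
    have hex2 : ∃ y ∈ s.erase x, f y ≠ 0 := by
      by_contra hc
      push_neg at hc
      rw [Finset.sum_eq_zero hc] at hrest
      omega
    obtain ⟨y, hy, hfy⟩ := hex2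
    have hsplit2 : f y + ∑ v ∈ (s.erase x).erase y, f v = 1 := by
      rw [Finset.add_sum_erase _ f hy]; exact hrest
    have hfy1 : f y = 1 := by omega
    have hyx : y ≠ x := (Finset.mem_erase.1 hy).1
    refine Or.inr ⟨x, hx, y, (Finset.mem_erase.1 hy).2, hyx.symm, hfx1, hfy1, ?_⟩
    intro z hz hzx hzy
    have hz' : z ∈ (s.erase x).erase y :=
      Finset.mem_erase.2 ⟨hzy, Finset.mem_erase.2 ⟨hzx, hz⟩⟩
    have : ∑ v ∈ (s.erase x).erase y, f v = 0 := by omega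
    exact Finset.sum_eq_zero_iff.1 this z hz'
  · have hfx2' : f x = 2 := by omega
    refine Or.inl ⟨x, hx, hfx2', ?_⟩
    intro y hy hyx
    have hy' : y ∈ s.erase x := Finset.mem_erase.2 ⟨hyx, hy⟩
    have : ∑ v ∈ s.erase x, f v = 0 := by omega
    exact Finset.sum_eq_zero_iff.1 this y hy'

end Multigraph
namespace Multigraph

variable {G : Multigraph}

lemma handshake (X : Finset G.E) : ∑ v ∈ G.supp X, G.degIn X v = 2 * X.card := by
  have h := G.sum_degIn X (G.supp X) (fun e he _ u hu => mem_supp_iff.2 ⟨e, he, hu⟩)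
  rw [h]
  congr 2
  apply Finset.filter_true_of_mem
  intro e he
  obtain ⟨a, b, hab⟩ := G.ends_rep e
  exact ⟨a, by rw [hab]; exact Sym2.mem_mk_left a b, mem_supp_iff.2 ⟨e, he, by rw [hab]; exact Sym2.mem_mk_left a b⟩⟩

lemma path_card {P : Finset G.E} {x y : G.V} (h : G.IsPathSet P x y) :
    (G.supp P).card = P.card + 1 := by
  obtain ⟨hconn, hxy, hx, hy, hdx, hdy, hint⟩ := h
  have hh := G.handshake P
  have hyx : y ∈ (G.supp P).erase x := Finset.mem_erase.2 ⟨hxy.symm, hy⟩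
  have hs1 : ∑ v ∈ G.supp P, G.degIn P v
      = G.degIn P x + ∑ v ∈ (G.supp P).erase x, G.degIn P v :=
    (Finset.add_sum_erase _ _ hx).symm
  have hs2 : ∑ v ∈ (G.supp P).erase x, G.degIn P v
      = G.degIn P y + ∑ v ∈ ((G.supp P).erase x).erase y, G.degIn P v :=
    (Finset.add_sum_erase _ _ hyx).symm
  have hs3 : ∑ v ∈ ((G.supp P).erase x).erase y, G.degIn P v
      = 2 * (((G.supp P).erase x).erase y).card := by
    rw [Finset.sum_congr rfl (fun v hv => ?_), Finset.sum_const, smul_eq_mul, mul_comm]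
    rw [Finset.mem_erase, Finset.mem_erase] at hv
    exact hint v hv.2.2 hv.2.1 hv.1
  have hc1 : ((G.supp P).erase x).card = (G.supp P).card - 1 :=
    Finset.card_erase_of_mem hx
  have hc2 : (((G.supp P).erase x).erase y).card = ((G.supp P).erase x).card - 1 :=
    Finset.card_erase_of_mem hyx
  have hge : 1 ≤ ((G.supp P).erase x).card := Finset.card_pos.2 ⟨y, hyx⟩
  have hge2 : 1 ≤ (G.supp P).card := Finset.card_pos.2 ⟨x, hx⟩
  omega

lemma cycle_card {C : Finset G.E} (h : G.IsCycleSet C) :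
    (G.supp C).card = C.card := by
  have hh := G.handshake C
  rw [Finset.sum_congr rfl h.2, Finset.sum_const, smul_eq_mul, mul_comm] at hh
  omega

lemma supp_univ_eq (h : G.NoIso) : G.supp Finset.univ = Finset.univ := by
  ext v
  simp only [Finset.mem_univ, iff_true]
  obtain ⟨e, he⟩ := h v
  exact mem_supp_iff.2 ⟨e, Finset.mem_univ e, he⟩

lemma reach_of_supp {X : Finset G.E} {u w : G.V} (hX : G.ConnSet X)
    (hu : u ∈ G.supp X) (hw : w ∈ G.supp X) : G.reachIn Finset.univ u w :=
  G.reachIn_mono (Finset.subset_univ X) (hX.2 u hu w hw)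

lemma theta_bicycle (h : G.IsTheta) : G.IsBicycle := by
  obtain ⟨hiso, x, y, P1, P2, P3, h1, h2, h3, huniv, d12, d13, d23, s12, s13, s23⟩ := h
  have hsupp := G.supp_univ_eq hiso
  have hsuppU : G.supp (Finset.univ : Finset G.E)
      = G.supp P1 ∪ G.supp P2 ∪ G.supp P3 := by
    rw [← huniv, supp_union, supp_union]
  have hmem : ∀ v : G.V, v ∈ G.supp P1 ∨ v ∈ G.supp P2 ∨ v ∈ G.supp P3 := by
    intro v
    have : v ∈ G.supp (Finset.univ : Finset G.E) := by rw [hsupp]; exact Finset.mem_univ v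
    rw [hsuppU] at this
    simp only [Finset.mem_union] at this
    tauto
  have hreachx : ∀ v : G.V, G.reachIn Finset.univ v x := by
    intro v
    rcases hmem v with hv | hv | hv
    · exact G.reach_of_supp h1.1 hv h1.2.2.1
    · exact G.reach_of_supp h2.1 hv h2.2.2.1
    · exact G.reach_of_supp h3.1 hv h3.2.2.1
  have hd12 : Disjoint (P1 ∪ P2) P3 := Finset.disjoint_union_left.2 ⟨d13, d23⟩
  have hdeg : ∀ v : G.V, G.degIn Finset.univ v
      = G.degIn P1 v + G.degIn P2 v + G.degIn P3 v := by
    intro v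
    rw [← huniv, G.degIn_union hd12, G.degIn_union d12]
  refine ⟨⟨⟨x⟩, fun u v => G.reachIn_trans (hreachx u) (G.reachIn_symm (hreachx v))⟩, ?_, ?_⟩
  · -- NoLeaf
    intro v
    rw [hdeg v]
    by_cases hvx : v = x
    · subst hvx; rw [h1.2.2.2.2.1, h2.2.2.2.2.1, h3.2.2.2.2.1]; omega
    by_cases hvy : v = y
    · subst hvy; rw [h1.2.2.2.2.2.1, h2.2.2.2.2.2.1, h3.2.2.2.2.2.1]; omega
    have hxy : v ∉ ({x, y} : Finset G.V) := by
      simp only [Finset.mem_insert, Finset.mem_singleton]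
      tauto
    have key : ∀ (P Q : Finset G.E), G.supp P ∩ G.supp Q = {x, y} →
        v ∈ G.supp P → v ∉ G.supp Q := by
      intro P Q hPQ hvP hvQ
      exact hxy (hPQ ▸ Finset.mem_inter.2 ⟨hvP, hvQ⟩)
    rcases hmem v with hv | hv | hv
    · rw [h1.2.2.2.2.2.2 v hv hvx hvy,
        G.degIn_eq_zero (key P1 P2 s12 hv), G.degIn_eq_zero (key P1 P3 s13 hv)]
      omega
    · rw [h2.2.2.2.2.2.2 v hv hvx hvy, G.degIn_eq_zero (key P2 P3 s23 hv),
        G.degIn_eq_zero (fun hv2 => key P1 P2 s12 hv2 hv)]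
      omega
    · rw [h3.2.2.2.2.2.2 v hv hvx hvy,
        G.degIn_eq_zero (fun hv2 => key P1 P3 s13 hv2 hv),
        G.degIn_eq_zero (fun hv2 => key P2 P3 s23 hv2 hv)]
      omega
  · -- deltaG
    have hxy : x ≠ y := h1.2.1
    have hcxy : ({x, y} : Finset G.V).card = 2 := Finset.card_pair hxy
    have hE : (Finset.univ : Finset G.E).card = P1.card + P2.card + P3.card := by
      rw [← huniv, Finset.card_union_of_disjoint hd12, Finset.card_union_of_disjoint d12]
    have hi12 := Finset.card_union_add_card_inter (G.supp P1) (G.supp P2)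
    rw [s12, hcxy] at hi12
    have hi3 := Finset.card_union_add_card_inter (G.supp P1 ∪ G.supp P2) (G.supp P3)
    have : (G.supp P1 ∪ G.supp P2) ∩ G.supp P3 = {x, y} := by
      rw [Finset.union_inter_distrib_right, s13, s23, Finset.union_self]
    rw [this, hcxy] at hi3
    have hV : (Finset.univ : Finset G.V).card
        = (G.supp P1 ∪ G.supp P2 ∪ G.supp P3).card := by rw [← hsuppU, hsupp]
    have hp1 := G.path_card h1
    have hp2 := G.path_card h2
    have hp3 := G.path_card h3
    unfold deltaG
    rw [← Finset.card_univ, ← Finset.card_univ (α := G.V)]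
    omega

end Multigraph
namespace Multigraph

variable {G : Multigraph}

lemma butterfly_bicycle (h : G.IsButterfly) : G.IsBicycle := by
  obtain ⟨hiso, C1, C2, x, hc1, hc2, d12, huniv, s12⟩ := h
  have hsupp := G.supp_univ_eq hiso
  have hsuppU : G.supp (Finset.univ : Finset G.E) = G.supp C1 ∪ G.supp C2 := by
    rw [← huniv, supp_union]
  have hx1 : x ∈ G.supp C1 := by
    have : x ∈ G.supp C1 ∩ G.supp C2 := by rw [s12]; exact Finset.mem_singleton_self x
    exact (Finset.mem_inter.1 this).1
  have hx2 : x ∈ G.supp C2 := by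
    have : x ∈ G.supp C1 ∩ G.supp C2 := by rw [s12]; exact Finset.mem_singleton_self x
    exact (Finset.mem_inter.1 this).2
  have hmem : ∀ v : G.V, v ∈ G.supp C1 ∨ v ∈ G.supp C2 := by
    intro v
    have : v ∈ G.supp (Finset.univ : Finset G.E) := by rw [hsupp]; exact Finset.mem_univ v
    rw [hsuppU] at this
    simpa using this
  have hreachx : ∀ v : G.V, G.reachIn Finset.univ v x := by
    intro v
    rcases hmem v with hv | hv
    · exact G.reach_of_supp hc1.1 hv hx1
    · exact G.reach_of_supp hc2.1 hv hx2
  have hdeg : ∀ v : G.V, G.degIn Finset.univ v = G.degIn C1 v + G.degIn C2 v := by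
    intro v
    rw [← huniv, G.degIn_union d12]
  refine ⟨⟨⟨x⟩, fun u v => G.reachIn_trans (hreachx u) (G.reachIn_symm (hreachx v))⟩, ?_, ?_⟩
  · intro v
    rw [hdeg v]
    by_cases hvx : v = x
    · rw [hvx, hc1.2 x hx1, hc2.2 x hx2]; omega
    rcases hmem v with hv | hv
    · have hv2 : v ∉ G.supp C2 := by
        intro hv2
        exact hvx (Finset.mem_singleton.1 (s12 ▸ Finset.mem_inter.2 ⟨hv, hv2⟩))
      rw [hc1.2 v hv, G.degIn_eq_zero hv2]
      omega
    · have hv1 : v ∉ G.supp C1 := by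
        intro hv1
        exact hvx (Finset.mem_singleton.1 (s12 ▸ Finset.mem_inter.2 ⟨hv1, hv⟩))
      rw [hc2.2 v hv, G.degIn_eq_zero hv1]
      omega
  · have hE : (Finset.univ : Finset G.E).card = C1.card + C2.card := by
      rw [← huniv, Finset.card_union_of_disjoint d12]
    have hi := Finset.card_union_add_card_inter (G.supp C1) (G.supp C2)
    rw [s12, Finset.card_singleton] at hi
    have hV : (Finset.univ : Finset G.V).card = (G.supp C1 ∪ G.supp C2).card := by
      rw [← hsuppU, hsupp]
    have hc1' := G.cycle_card hc1
    have hc2' := G.cycle_card hc2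
    unfold deltaG
    rw [← Finset.card_univ, ← Finset.card_univ (α := G.V)]
    omega

lemma dumbbell_bicycle (h : G.IsDumbbell) : G.IsBicycle := by
  obtain ⟨hiso, C1, C2, P, x, y, hc1, hc2, hp, d12, d1p, d2p, huniv, s12, s1p, s2p⟩ := h
  have hsupp := G.supp_univ_eq hiso
  have hsuppU : G.supp (Finset.univ : Finset G.E)
      = G.supp C1 ∪ G.supp C2 ∪ G.supp P := by
    rw [← huniv, supp_union, supp_union]
  have hx1 : x ∈ G.supp C1 := by
    have : x ∈ G.supp C1 ∩ G.supp P := by rw [s1p]; exact Finset.mem_singleton_self x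
    exact (Finset.mem_inter.1 this).1
  have hxP : x ∈ G.supp P := hp.2.2.1
  have hyP : y ∈ G.supp P := hp.2.2.2.1
  have hy2 : y ∈ G.supp C2 := by
    have : y ∈ G.supp C2 ∩ G.supp P := by rw [s2p]; exact Finset.mem_singleton_self y
    exact (Finset.mem_inter.1 this).1
  have hmem : ∀ v : G.V, v ∈ G.supp C1 ∨ v ∈ G.supp C2 ∨ v ∈ G.supp P := by
    intro v
    have : v ∈ G.supp (Finset.univ : Finset G.E) := by rw [hsupp]; exact Finset.mem_univ v
    rw [hsuppU] at this
    simp only [Finset.mem_union] at this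
    tauto
  have hreachx : ∀ v : G.V, G.reachIn Finset.univ v x := by
    intro v
    rcases hmem v with hv | hv | hv
    · exact G.reach_of_supp hc1.1 hv hx1
    · exact G.reachIn_trans (G.reach_of_supp hc2.1 hv hy2)
        (G.reach_of_supp hp.1 hyP hxP)
    · exact G.reach_of_supp hp.1 hv hxP
  have hd12 : Disjoint (C1 ∪ C2) P := Finset.disjoint_union_left.2 ⟨d1p, d2p⟩
  have hdeg : ∀ v : G.V, G.degIn Finset.univ v
      = G.degIn C1 v + G.degIn C2 v + G.degIn P v := by
    intro v
    rw [← huniv, G.degIn_union hd12, G.degIn_union d12]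
  have honly : ∀ v : G.V, (v ∈ G.supp C1 → v ≠ x → v ∉ G.supp C2 ∧ v ∉ G.supp P)
      ∧ (v ∈ G.supp C2 → v ≠ y → v ∉ G.supp C1 ∧ v ∉ G.supp P) := by
    intro v
    constructor
    · intro hv hvx
      refine ⟨fun hv2 => ?_, fun hvP => ?_⟩
      · have : v ∈ G.supp C1 ∩ G.supp C2 := Finset.mem_inter.2 ⟨hv, hv2⟩
        rw [s12] at this
        exact absurd this (Finset.notMem_empty v)
      · exact hvx (Finset.mem_singleton.1 (s1p ▸ Finset.mem_inter.2 ⟨hv, hvP⟩))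
    · intro hv hvy
      refine ⟨fun hv1 => ?_, fun hvP => ?_⟩
      · have : v ∈ G.supp C1 ∩ G.supp C2 := Finset.mem_inter.2 ⟨hv1, hv⟩
        rw [s12] at this
        exact absurd this (Finset.notMem_empty v)
      · exact hvy (Finset.mem_singleton.1 (s2p ▸ Finset.mem_inter.2 ⟨hv, hvP⟩))
  refine ⟨⟨⟨x⟩, fun u v => G.reachIn_trans (hreachx u) (G.reachIn_symm (hreachx v))⟩, ?_, ?_⟩
  · intro v
    rw [hdeg v]
    by_cases hvx : v = x
    · rw [hvx]
      have hx2 : x ∉ G.supp C2 := by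
        intro hx2
        have hxy : x ≠ y := hp.2.1
        exact ((honly x).2 hx2 hxy).1 hx1
      rw [hc1.2 x hx1, G.degIn_eq_zero hx2, hp.2.2.2.2.1]
      omega
    by_cases hvy : v = y
    · rw [hvy]
      have hy1 : y ∉ G.supp C1 := by
        intro hy1
        exact ((honly y).1 hy1 (fun hh => hp.2.1 hh.symm)).1 hy2
      rw [hc2.2 y hy2, G.degIn_eq_zero hy1, hp.2.2.2.2.2.1]
      omega
    rcases hmem v with hv | hv | hv
    · obtain ⟨h1, h2⟩ := (honly v).1 hv hvx
      rw [hc1.2 v hv, G.degIn_eq_zero h1, G.degIn_eq_zero h2]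
      omega
    · obtain ⟨h1, h2⟩ := (honly v).2 hv hvy
      rw [hc2.2 v hv, G.degIn_eq_zero h1, G.degIn_eq_zero h2]
      omega
    · have h1 : v ∉ G.supp C1 := by
        intro h1
        exact hvx (Finset.mem_singleton.1 (s1p ▸ Finset.mem_inter.2 ⟨h1, hv⟩))
      have h2 : v ∉ G.supp C2 := by
        intro h2
        exact hvy (Finset.mem_singleton.1 (s2p ▸ Finset.mem_inter.2 ⟨h2, hv⟩))
      rw [hp.2.2.2.2.2.2 v hv hvx hvy, G.degIn_eq_zero h1, G.degIn_eq_zero h2]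
      omega
  · have hE : (Finset.univ : Finset G.E).card = C1.card + C2.card + P.card := by
      rw [← huniv, Finset.card_union_of_disjoint hd12, Finset.card_union_of_disjoint d12]
    have hi12 := Finset.card_union_add_card_inter (G.supp C1) (G.supp C2)
    rw [s12, Finset.card_empty] at hi12
    have hi3 := Finset.card_union_add_card_inter (G.supp C1 ∪ G.supp C2) (G.supp P)
    have hint : (G.supp C1 ∪ G.supp C2) ∩ G.supp P = {x, y} := by
      rw [Finset.union_inter_distrib_right, s1p, s2p]
      ext v
      simp only [Finset.mem_union, Finset.mem_singleton, Finset.mem_insert]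
    have hcxy : ({x, y} : Finset G.V).card = 2 := Finset.card_pair hp.2.1
    rw [hint, hcxy] at hi3
    have hV : (Finset.univ : Finset G.V).card
        = (G.supp C1 ∪ G.supp C2 ∪ G.supp P).card := by rw [← hsuppU, hsupp]
    have hc1' := G.cycle_card hc1
    have hc2' := G.cycle_card hc2
    have hpc := G.path_card hp
    unfold deltaG
    rw [← Finset.card_univ, ← Finset.card_univ (α := G.V)]
    omega

end Multigraph
namespace Multigraph

variable {G : Multigraph}

/-- Edges meeting the terminal set `S`. -/
noncomputable def AS (G : Multigraph) (S : Finset G.V) : Finset G.E :=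
  Finset.univ.filter (fun e => ∃ v ∈ G.ends e, v ∈ S)

/-- Edges avoiding the terminal set `S`. -/
noncomputable def YS (G : Multigraph) (S : Finset G.V) : Finset G.E :=
  Finset.univ.filter (fun e => ∀ v ∈ G.ends e, v ∉ S)

/-- Edges of `AS` with an end in the vertex set `W`. -/
noncomputable def slotE (G : Multigraph) (S : Finset G.V) (W : Finset G.V) : Finset G.E :=
  (G.AS S).filter (fun g => ∃ u ∈ G.ends g, u ∈ W)

variable {S : Finset G.V}

lemma mem_AS {e : G.E} : e ∈ G.AS S ↔ ∃ v ∈ G.ends e, v ∈ S := by simp [AS]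

lemma mem_YS {e : G.E} : e ∈ G.YS S ↔ ∀ v ∈ G.ends e, v ∉ S := by simp [YS]

lemma mem_YS_of_not_AS {e : G.E} (h : e ∉ G.AS S) : e ∈ G.YS S := by
  rw [mem_AS] at h
  push_neg at h
  exact mem_YS.2 h

lemma AS_disj_YS : Disjoint (G.AS S) (G.YS S) := by
  rw [Finset.disjoint_left]
  intro e he he'
  obtain ⟨v, hv, hvS⟩ := mem_AS.1 he
  exact mem_YS.1 he' v hv hvS

lemma AS_union_YS : G.AS S ∪ G.YS S = Finset.univ := by
  ext e
  simp only [Finset.mem_union, Finset.mem_univ, iff_true]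
  by_cases h : e ∈ G.AS S
  · exact Or.inl h
  · exact Or.inr (mem_YS_of_not_AS h)

lemma degIn_AS_add_YS (u : G.V) :
    G.degIn Finset.univ u = G.degIn (G.AS S) u + G.degIn (G.YS S) u := by
  rw [← G.degIn_union AS_disj_YS, AS_union_YS]

lemma mem_slotE {W : Finset G.V} {e : G.E} :
    e ∈ G.slotE S W ↔ e ∈ G.AS S ∧ ∃ u ∈ G.ends e, u ∈ W := by simp [slotE]

lemma not_mem_S_of_mem_compVerts {v u : G.V} (hv : v ∉ S)
    (hu : u ∈ G.compVerts (G.YS S) v) : u ∉ S := by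
  rcases G.reachIn_mem_supp (mem_compVerts.1 hu) with rfl | hu'
  · exact hv
  · obtain ⟨e, he, hue⟩ := mem_supp_iff.1 hu'
    exact mem_YS.1 he u hue

lemma mem_supp_comp_of_mem_compVerts {X : Finset G.E} {v u : G.V}
    (hu : u ∈ G.compVerts X v) : u = v ∨ u ∈ G.supp (G.compEdges X v) := by
  rcases (mem_compVerts.1 hu).cases_tail with rfl | ⟨c, hc, e, he, hends⟩
  · exact Or.inl rfl
  · refine Or.inr (mem_supp_iff.2 ⟨e, mem_compEdges.2 ⟨he, c, ?_, hc⟩, ?_⟩)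
    · rw [hends]; exact Sym2.mem_mk_left _ _
    · rw [hends]; exact Sym2.mem_mk_right _ _

lemma compEdges_YS_filter {v : G.V} :
    G.compEdges (G.YS S) v
      = (G.YS S).filter (fun e => ∃ u ∈ G.ends e, u ∈ G.compVerts (G.YS S) v) := by
  ext e
  simp only [mem_compEdges, Finset.mem_filter, mem_compVerts]

/-- The support of `W` accounts for the slot edges: if `W` avoids `S`, the sum of
`AS`-degrees over `W` is the number of slot edges. -/
lemma sum_degAS {W : Finset G.V} (hWS : ∀ u ∈ W, u ∉ S) :
    ∑ u ∈ W, G.degIn (G.AS S) u = (G.slotE S W).card := by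
  simp only [degIn_eq_sum_cnt]
  rw [Finset.sum_comm]
  have key : ∀ e ∈ G.AS S, ∑ u ∈ W, G.cnt e u
      = if (∃ u ∈ G.ends e, u ∈ W) then 1 else 0 := by
    intro e he
    obtain ⟨s0, hs0e, hs0S⟩ := mem_AS.1 he
    by_cases hW : ∃ u ∈ G.ends e, u ∈ W
    · obtain ⟨u0, hu0e, hu0W⟩ := hW
      have hs0u0 : s0 ≠ u0 := fun h => hWS u0 hu0W (h ▸ hs0S)
      have hends : G.ends e = s(s0, u0) := sym2_eq hs0e hu0e hs0u0
      have : ∀ u ∈ W, G.cnt e u = if u = u0 then 1 else 0 := by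
        intro u hu
        rw [G.cnt_nonloop hends hs0u0]
        have hus0 : u ≠ s0 := fun h => hWS u hu (h ▸ hs0S)
        by_cases h2 : u = u0
        · rw [if_pos (Or.inr h2), if_pos h2]
        · rw [if_neg (by tauto), if_neg h2]
      rw [Finset.sum_congr rfl this, Finset.sum_ite_eq' W u0 (fun _ => 1),
        if_pos hu0W, if_pos ⟨u0, hu0e, hu0W⟩]
    · rw [if_neg hW]
      exact G.sum_cnt_not_mem (fun u hu huW => hW ⟨u, hu, huW⟩)
  rw [Finset.sum_congr rfl key, Finset.sum_ite, Finset.sum_const, Finset.sum_const]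
  simp [slotE]

/-- Key component analysis: each component of `G - S` is a tree receiving
exactly two slot edges. -/
lemma comp_main (hconn : ∀ u v : G.V, G.reachIn Finset.univ u v)
    (hdeg : ∀ u : G.V, u ∉ S → G.degIn Finset.univ u = 2)
    (hS : S.Nonempty) {v : G.V} (hv : v ∉ S) :
    (G.slotE S (G.compVerts (G.YS S) v)).card = 2 ∧
    (G.compVerts (G.YS S) v).card = (G.compEdges (G.YS S) v).card + 1 := by
  set W := G.compVerts (G.YS S) v with hW
  set K := G.compEdges (G.YS S) v with hK
  have hWS : ∀ u ∈ W, u ∉ S := fun u hu => G.not_mem_S_of_mem_compVerts hv hu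
  have hvW : v ∈ W := mem_compVerts.2 Relation.ReflTransGen.refl
  -- closure of W under Y-edges
  have hclosure : ∀ e ∈ G.YS S, (∃ u ∈ G.ends e, u ∈ W) → ∀ u ∈ G.ends e, u ∈ W := by
    intro e he hex u hu
    obtain ⟨u0, hu0, hu0W⟩ := hex
    have heK : e ∈ K := mem_compEdges.2 ⟨he, u0, hu0, mem_compVerts.1 hu0W⟩
    exact G.ends_subset_compVerts heK u hu
  have hsumY : ∑ u ∈ W, G.degIn (G.YS S) u = 2 * K.card := by
    rw [G.sum_degIn (G.YS S) W hclosure]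
    congr 1
    rw [hK, compEdges_YS_filter]
  have hsumX : ∑ u ∈ W, G.degIn Finset.univ u = 2 * W.card := by
    rw [Finset.sum_congr rfl (fun u hu => hdeg u (hWS u hu)), Finset.sum_const]
    simp [mul_comm]
  have hsplit : ∑ u ∈ W, G.degIn Finset.univ u
      = ∑ u ∈ W, G.degIn (G.AS S) u + ∑ u ∈ W, G.degIn (G.YS S) u := by
    rw [← Finset.sum_add_distrib]
    exact Finset.sum_congr rfl (fun u _ => degIn_AS_add_YS u)
  have hsumA := G.sum_degAS hWS
  have heq : (G.slotE S W).card + 2 * K.card = 2 * W.card := by omega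
  -- slot edges exist, by connectivity
  have hslotne : (G.slotE S W).Nonempty := by
    by_contra hne
    rw [Finset.not_nonempty_iff_eq_empty] at hne
    have claim : ∀ u w : G.V, G.reachIn Finset.univ u w → u ∈ W → w ∈ W := by
      intro u w hr hu
      induction hr with
      | refl => exact hu
      | tail h1 h2 ih =>
        obtain ⟨e, _, hends⟩ := h2
        by_cases heA : e ∈ G.AS S
        · exfalso
          have : e ∈ G.slotE S W := mem_slotE.2 ⟨heA, _,
            by rw [hends]; exact Sym2.mem_mk_left _ _, ih⟩
          rw [hne] at this
          exact absurd this (Finset.notMem_empty e)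
        · exact mem_compVerts.2 ((mem_compVerts.1 ih).tail
            ⟨e, mem_YS_of_not_AS heA, hends⟩)
    obtain ⟨s0, hs0⟩ := hS
    exact hWS s0 (claim v s0 (hconn v s0) hvW) hs0
  -- tree bound
  have htree : W.card ≤ K.card + 1 := by
    by_cases hKe : K = ∅
    · have : W = {v} := by
        ext u
        rw [Finset.mem_singleton]
        constructor
        · intro hu
          rcases G.mem_supp_comp_of_mem_compVerts hu with h | h
          · exact h
          · rw [← hK, hKe] at h
            obtain ⟨e, he, _⟩ := mem_supp_iff.1 h
            exact absurd he (Finset.notMem_empty e)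
        · rintro rfl; exact hvW
      rw [this, hKe]
      simp
    · have hKne : K.Nonempty := Finset.nonempty_iff_ne_empty.2 hKe
      have hvK : v ∈ G.supp K := by
        obtain ⟨e, he⟩ := hKne
        obtain ⟨heY, u0, hu0, hr0⟩ := mem_compEdges.1 he
        rcases hr0.cases_head with rfl | ⟨c, hadj, _⟩
        · exact mem_supp_iff.2 ⟨e, he, hu0⟩
        · obtain ⟨e', he', hends'⟩ := hadj
          refine mem_supp_iff.2 ⟨e', mem_compEdges.2 ⟨he', v, ?_,
            Relation.ReflTransGen.refl⟩, ?_⟩ <;>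
            (rw [hends']; exact Sym2.mem_mk_left _ _)
      have hWsupp : W ⊆ G.supp K := by
        intro u hu
        rcases G.mem_supp_comp_of_mem_compVerts hu with rfl | h
        · exact hvK
        · exact h
      have hKconn : G.ConnSet K := by
        refine ⟨hKne, fun u hu w hw => ?_⟩
        have hu' : u ∈ W := G.supp_compEdges_subset hu
        have hw' : w ∈ W := G.supp_compEdges_subset hw
        have h1 : G.reachIn K v u := G.reachIn_compEdges (mem_compVerts.1 hu')
        have h2 : G.reachIn K v w := G.reachIn_compEdges (mem_compVerts.1 hw')
        exact G.reachIn_trans (G.reachIn_symm h1) h2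
      have := G.card_supp_le hKconn
      have := Finset.card_le_card hWsupp
      omega
  have hge1 : 1 ≤ (G.slotE S W).card := Finset.card_pos.2 hslotne
  exact ⟨by omega, by omega⟩

end Multigraph
namespace Multigraph

variable {G : Multigraph} {S : Finset G.V}

/-- The piece (cycle or path through terminals) containing the edge `f ∈ AS`. -/
noncomputable def pieceOf (G : Multigraph) (S : Finset G.V) (f : G.E) : Finset G.E :=
  if h : ∃ u ∈ G.ends f, u ∉ S then
    G.compEdges (G.YS S) h.choose ∪ G.slotE S (G.compVerts (G.YS S) h.choose)
  else {f}

lemma choice_unique {f : G.E} (hf : f ∈ G.AS S) {w : G.V} (hw : w ∈ G.ends f)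
    (hwS : w ∉ S) (h : ∃ u ∈ G.ends f, u ∉ S) : h.choose = w := by
  obtain ⟨hc1, hc2⟩ := h.choose_spec
  by_contra hne
  obtain ⟨s0, hs0, hs0S⟩ := mem_AS.1 hf
  have hends : G.ends f = s(h.choose, w) := sym2_eq hc1 hw hne
  rw [hends, Sym2.mem_iff] at hs0
  rcases hs0 with rfl | rfl
  · exact hc2 hs0S
  · exact hwS hs0S

lemma piece_eq_of_mem_W {u : G.V} (hu : u ∉ S) {f : G.E}
    (hf : f ∈ G.slotE S (G.compVerts (G.YS S) u)) :
    G.pieceOf S f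
      = G.compEdges (G.YS S) u ∪ G.slotE S (G.compVerts (G.YS S) u) := by
  obtain ⟨hfA, w, hw, hwW⟩ := mem_slotE.1 hf
  have hwS : w ∉ S := G.not_mem_S_of_mem_compVerts hu hwW
  have h : ∃ u ∈ G.ends f, u ∉ S := ⟨w, hw, hwS⟩
  rw [pieceOf, dif_pos h, choice_unique hfA hw hwS h]
  have hcv : G.compVerts (G.YS S) w = G.compVerts (G.YS S) u :=
    (G.compVerts_congr (mem_compVerts.1 hwW)).symm
  rw [hcv, G.compEdges_congr hcv]

lemma piece_self {f : G.E} (hf : f ∈ G.AS S) : f ∈ G.pieceOf S f := by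
  rw [pieceOf]
  by_cases h : ∃ u ∈ G.ends f, u ∉ S
  · rw [dif_pos h]
    refine Finset.mem_union_right _ (mem_slotE.2 ⟨hf, h.choose, h.choose_spec.1,
      mem_compVerts.2 Relation.ReflTransGen.refl⟩)
  · rw [dif_neg h]
    exact Finset.mem_singleton_self f

lemma piece_cover (hconn : ∀ u v : G.V, G.reachIn Finset.univ u v)
    (hdeg : ∀ u : G.V, u ∉ S → G.degIn Finset.univ u = 2)
    (hS : S.Nonempty) (e : G.E) : ∃ f ∈ G.AS S, e ∈ G.pieceOf S f := by
  by_cases heA : e ∈ G.AS S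
  · exact ⟨e, heA, piece_self heA⟩
  · have heY : e ∈ G.YS S := mem_YS_of_not_AS heA
    obtain ⟨a, b, hab⟩ := G.ends_rep e
    have hae : a ∈ G.ends e := by rw [hab]; exact Sym2.mem_mk_left a b
    have haS : a ∉ S := mem_YS.1 heY a hae
    obtain ⟨hslot2, _⟩ := G.comp_main hconn hdeg hS haS
    have hne : (G.slotE S (G.compVerts (G.YS S) a)).Nonempty := by
      rw [← Finset.card_pos, hslot2]; omega
    obtain ⟨f, hf⟩ := hne
    refine ⟨f, (mem_slotE.1 hf).1, ?_⟩
    rw [piece_eq_of_mem_W haS hf]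
    exact Finset.mem_union_left _
      (mem_compEdges.2 ⟨heY, a, hae, Relation.ReflTransGen.refl⟩)

lemma mem_W_of_mem_supp_piece {v0 : G.V} (hv0 : v0 ∉ S) {u : G.V} (huS : u ∉ S)
    (hu : u ∈ G.supp (G.compEdges (G.YS S) v0 ∪ G.slotE S (G.compVerts (G.YS S) v0))) :
    u ∈ G.compVerts (G.YS S) v0 := by
  rw [supp_union, Finset.mem_union] at hu
  rcases hu with hu | hu
  · exact G.supp_compEdges_subset hu
  · obtain ⟨e, he, hue⟩ := mem_supp_iff.1 hu
    obtain ⟨heA, w, hw, hwW⟩ := mem_slotE.1 he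
    have hwS : w ∉ S := G.not_mem_S_of_mem_compVerts hv0 hwW
    by_cases huw : u = w
    · exact huw ▸ hwW
    · exfalso
      have hends : G.ends e = s(u, w) := sym2_eq hue hw huw
      obtain ⟨s0, hs0, hs0S⟩ := mem_AS.1 heA
      rw [hends, Sym2.mem_iff] at hs0
      rcases hs0 with rfl | rfl
      · exact huS hs0S
      · exact hwS hs0S

/-- Classification of pieces: each piece is a cycle through one terminal or a
path between two terminals. -/
lemma piece_spec (hconn : ∀ u v : G.V, G.reachIn Finset.univ u v)
    (hdeg : ∀ u : G.V, u ∉ S → G.degIn Finset.univ u = 2)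
    (hS : S.Nonempty) {f : G.E} (hf : f ∈ G.AS S) :
    ∃ sf sg : G.V, sf ∈ S ∧ sg ∈ S ∧
      sf ∈ G.supp (G.pieceOf S f) ∧ sg ∈ G.supp (G.pieceOf S f) ∧
      (∀ t ∈ S, t ∈ G.supp (G.pieceOf S f) → t = sf ∨ t = sg) ∧
      (sf = sg → G.IsCycleSet (G.pieceOf S f) ∧ G.degIn (G.pieceOf S f) sf = 2) ∧
      (sf ≠ sg → G.IsPathSet (G.pieceOf S f) sf sg) := by
  by_cases h : ∃ u ∈ G.ends f, u ∉ S
  · -- type 2 : a genuine component piece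
    obtain ⟨hve, hvS⟩ := h.choose_spec
    set v := h.choose with hvdef
    have hQdef : G.pieceOf S f
        = G.compEdges (G.YS S) v ∪ G.slotE S (G.compVerts (G.YS S) v) := by
      rw [pieceOf, dif_pos h]
    set W := G.compVerts (G.YS S) v with hWdef
    set K := G.compEdges (G.YS S) v with hKdef
    set Q := G.pieceOf S f with hQdef2
    have hWS : ∀ u ∈ W, u ∉ S := fun u hu => G.not_mem_S_of_mem_compVerts hvS hu
    have hvW : v ∈ W := mem_compVerts.2 Relation.ReflTransGen.refl
    obtain ⟨hslot2, _⟩ := G.comp_main hconn hdeg hS hvS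
    have hfslot : f ∈ G.slotE S W := mem_slotE.2 ⟨hf, v, hve, hvW⟩
    obtain ⟨f1, f2, hf12, hset⟩ := Finset.card_eq_two.1 hslot2
    have hf1 : f1 ∈ G.slotE S W := by rw [hset]; exact Finset.mem_insert_self f1 _
    have hf2 : f2 ∈ G.slotE S W := by
      rw [hset]; exact Finset.mem_insert_of_mem (Finset.mem_singleton_self f2)
    have hrep : ∀ g ∈ G.slotE S W, ∃ s w : G.V,
        G.ends g = s(s, w) ∧ s ∈ S ∧ w ∈ W := by
      intro g hg
      obtain ⟨hgA, w, hw, hwW⟩ := mem_slotE.1 hg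
      obtain ⟨s0, hs0, hs0S⟩ := mem_AS.1 hgA
      have hne : s0 ≠ w := fun hh => hWS w hwW (hh ▸ hs0S)
      exact ⟨s0, w, sym2_eq hs0 hw hne, hs0S, hwW⟩
    obtain ⟨s1, w1, hends1, hs1S, hw1W⟩ := hrep f1 hf1
    obtain ⟨s2, w2, hends2, hs2S, hw2W⟩ := hrep f2 hf2
    have hs1w1 : s1 ≠ w1 := fun hh => hWS w1 hw1W (hh ▸ hs1S)
    have hs2w2 : s2 ≠ w2 := fun hh => hWS w2 hw2W (hh ▸ hs2S)
    have hKQ : K ⊆ Q := by rw [hQdef]; exact Finset.subset_union_left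
    have hsQ : G.slotE S W ⊆ Q := by rw [hQdef]; exact Finset.subset_union_right
    have hKW : G.supp K ⊆ W := G.supp_compEdges_subset
    have hKY : K ⊆ G.YS S := Finset.filter_subset _ _
    have hdisjK : Disjoint K (G.slotE S W) := by
      refine Finset.disjoint_left.2 (fun e heK heS => ?_)
      exact Finset.disjoint_left.1 AS_disj_YS (mem_slotE.1 heS).1 (hKY heK)
    have hsuppQ : ∀ u : G.V, u ∈ G.supp Q ↔
        u ∈ G.supp K ∨ u ∈ G.ends f1 ∨ u ∈ G.ends f2 := by
      intro u
      rw [hQdef, supp_union, Finset.mem_union]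
      constructor
      · rintro (hu | hu)
        · exact Or.inl hu
        · obtain ⟨e, he, hue⟩ := mem_supp_iff.1 hu
          rw [hset, Finset.mem_insert, Finset.mem_singleton] at he
          rcases he with rfl | rfl
          · exact Or.inr (Or.inl hue)
          · exact Or.inr (Or.inr hue)
      · rintro (hu | hu | hu)
        · exact Or.inl hu
        · exact Or.inr (mem_supp_iff.2 ⟨f1, by rw [hset]; exact Finset.mem_insert_self _ _, hu⟩)
        · exact Or.inr (mem_supp_iff.2 ⟨f2,
            by rw [hset]; exact Finset.mem_insert_of_mem (Finset.mem_singleton_self f2), hu⟩)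
    have hs1supp : s1 ∈ G.supp Q := (hsuppQ s1).2 (Or.inr (Or.inl
      (by rw [hends1]; exact Sym2.mem_mk_left _ _)))
    have hs2supp : s2 ∈ G.supp Q := (hsuppQ s2).2 (Or.inr (Or.inr
      (by rw [hends2]; exact Sym2.mem_mk_left _ _)))
    -- degrees
    have hQdeg : ∀ u : G.V, G.degIn Q u = G.degIn K u + G.degIn (G.slotE S W) u := by
      intro u
      rw [hQdef, G.degIn_union hdisjK]
    have hdW : ∀ u ∈ W, G.degIn Q u = 2 := by
      intro u hu
      have h1 : G.degIn K u = G.degIn (G.YS S) u := G.degIn_compEdges hu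
      have h2 : G.degIn (G.slotE S W) u = G.degIn (G.AS S) u := by
        simp only [degIn_eq_sum_cnt]
        refine Finset.sum_subset (Finset.filter_subset _ _) ?_
        intro e he hne
        refine G.cnt_eq_zero (fun hc => hne (mem_slotE.2 ⟨he, u, hc, hu⟩))
      rw [hQdeg, h1, h2]
      have h3 := hdeg u (hWS u hu)
      rw [degIn_AS_add_YS (S := S) u] at h3
      omega
    have hdS : ∀ s ∈ S, G.degIn Q s
        = (if s = s1 then 1 else 0) + (if s = s2 then 1 else 0) := by
      intro s hsS
      have hKs : G.degIn K s = 0 :=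
        G.degIn_eq_zero (fun hc => hWS s (hKW hc) hsS)
      have hslot : G.degIn (G.slotE S W) s = G.cnt f1 s + G.cnt f2 s := by
        rw [degIn_eq_sum_cnt, hset, Finset.sum_pair hf12]
      have hc1 : G.cnt f1 s = if s = s1 then 1 else 0 := by
        rw [G.cnt_nonloop hends1 hs1w1]
        have : s ≠ w1 := fun hh => hWS w1 hw1W (hh ▸ hsS)
        by_cases h2 : s = s1
        · rw [if_pos (Or.inl h2), if_pos h2]
        · rw [if_neg (by tauto), if_neg h2]
      have hc2 : G.cnt f2 s = if s = s2 then 1 else 0 := by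
        rw [G.cnt_nonloop hends2 hs2w2]
        have : s ≠ w2 := fun hh => hWS w2 hw2W (hh ▸ hsS)
        by_cases h2 : s = s2
        · rw [if_pos (Or.inl h2), if_pos h2]
        · rw [if_neg (by tauto), if_neg h2]
      rw [hQdeg, hKs, hslot, hc1, hc2]
      omega
    -- connectivity
    have hreachv : ∀ u ∈ G.supp Q, G.reachIn Q v u := by
      intro u hu
      have hreachW : ∀ w ∈ W, G.reachIn Q v w := fun w hw =>
        G.reachIn_mono hKQ (G.reachIn_compEdges (mem_compVerts.1 hw))
      rcases (hsuppQ u).1 hu with hu' | hu' | hu'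
      · exact hreachW u (hKW hu')
      · rw [hends1, Sym2.mem_iff] at hu'
        rcases hu' with rfl | rfl
        · exact (hreachW w1 hw1W).tail ⟨f1, hsQ hf1, by rw [hends1]; exact Sym2.eq_swap⟩
        · exact hreachW u hw1W
      · rw [hends2, Sym2.mem_iff] at hu'
        rcases hu' with rfl | rfl
        · exact (hreachW w2 hw2W).tail ⟨f2, hsQ hf2, by rw [hends2]; exact Sym2.eq_swap⟩
        · exact hreachW u hw2W
    have hconnQ : G.ConnSet Q := by
      refine ⟨⟨f, hsQ hfslot⟩, fun u hu w hw => ?_⟩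
      exact G.reachIn_trans (G.reachIn_symm (hreachv u hu)) (hreachv w hw)
    have hinterior : ∀ u ∈ G.supp Q, u ≠ s1 → u ≠ s2 → u ∈ W := by
      intro u hu h1 h2
      rcases (hsuppQ u).1 hu with hu' | hu' | hu'
      · exact hKW hu'
      · rw [hends1, Sym2.mem_iff] at hu'
        rcases hu' with rfl | rfl
        · exact absurd rfl h1
        · exact hw1W
      · rw [hends2, Sym2.mem_iff] at hu'
        rcases hu' with rfl | rfl
        · exact absurd rfl h2
        · exact hw2W
    refine ⟨s1, s2, hs1S, hs2S, hs1supp, hs2supp, ?_, ?_, ?_⟩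
    · intro t htS htsupp
      by_contra hc
      push_neg at hc
      exact hWS t (hinterior t htsupp hc.1 hc.2) htS
    · intro heq
      refine ⟨⟨hconnQ, ?_⟩, ?_⟩
      · intro u hu
        by_cases h1 : u = s1
        · rw [h1, hdS s1 hs1S, if_pos rfl, if_pos heq]
        by_cases h2 : u = s2
        · rw [h2, hdS s2 hs2S, if_pos heq.symm, if_pos rfl]
        · exact hdW u (hinterior u hu h1 h2)
      · rw [hdS s1 hs1S, if_pos rfl, if_pos heq]
    · intro hne
      refine ⟨hconnQ, hne, hs1supp, hs2supp, ?_, ?_, ?_⟩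
      · rw [hdS s1 hs1S, if_pos rfl, if_neg hne]
      · rw [hdS s2 hs2S, if_neg (fun hh => hne hh.symm), if_pos rfl]
      · intro u hu h1 h2
        exact hdW u (hinterior u hu h1 h2)
  · -- type 1 : a single edge inside S
    have hall : ∀ u ∈ G.ends f, u ∈ S := by
      push_neg at h
      exact h
    have hQdef : G.pieceOf S f = {f} := by rw [pieceOf, dif_neg h]
    obtain ⟨a, b, hab⟩ := G.ends_rep f
    have hae : a ∈ G.ends f := by rw [hab]; exact Sym2.mem_mk_left a b
    have hbe : b ∈ G.ends f := by rw [hab]; exact Sym2.mem_mk_right a b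
    have hsupp1 : ∀ u : G.V, u ∈ G.supp (G.pieceOf S f) ↔ u ∈ G.ends f := by
      intro u
      rw [hQdef, mem_supp_iff]
      simp
    refine ⟨a, b, hall a hae, hall b hbe, (hsupp1 a).2 hae, (hsupp1 b).2 hbe, ?_, ?_, ?_⟩
    · intro t _ htsupp
      rw [hsupp1, hab, Sym2.mem_iff] at htsupp
      exact htsupp
    · intro heq
      rw [hQdef]
      have hloop : G.ends f = s(a, a) := by rw [hab, ← heq]
      have hdega : G.degIn {f} a = 2 := by
        rw [degIn_eq_sum_cnt, Finset.sum_singleton, G.cnt_loop hloop]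
      have hsingle : ∀ u : G.V, u ∈ G.supp ({f} : Finset G.E) → u = a := by
        intro u hu
        obtain ⟨e, he, hue⟩ := mem_supp_iff.1 hu
        rw [Finset.mem_singleton] at he
        subst he
        rw [hloop, Sym2.mem_iff] at hue
        tauto
      refine ⟨⟨⟨⟨f, Finset.mem_singleton_self f⟩, fun u hu w hw => ?_⟩,
        fun u hu => ?_⟩, hdega⟩
      · rw [hsingle u hu, hsingle w hw]
        exact Relation.ReflTransGen.refl
      · rw [hsingle u hu]
        exact hdega
    · intro hne
      rw [hQdef]
      have hcnta : G.cnt f a = 1 := by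
        rw [G.cnt_nonloop hab hne, if_pos (Or.inl rfl)]
      have hcntb : G.cnt f b = 1 := by
        rw [G.cnt_nonloop hab hne, if_pos (Or.inr rfl)]
      have hsupp2 : ∀ u : G.V, u ∈ G.supp ({f} : Finset G.E) → u = a ∨ u = b := by
        intro u hu
        obtain ⟨e, he, hue⟩ := mem_supp_iff.1 hu
        rw [Finset.mem_singleton] at he
        subst he
        rw [hab, Sym2.mem_iff] at hue
        exact hue
      have hadj : G.adjIn {f} a b := ⟨f, Finset.mem_singleton_self f, hab⟩
      refine ⟨⟨⟨f, Finset.mem_singleton_self f⟩, fun u hu w hw => ?_⟩, hne,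
        mem_supp_iff.2 ⟨f, Finset.mem_singleton_self f, hae⟩,
        mem_supp_iff.2 ⟨f, Finset.mem_singleton_self f, hbe⟩, ?_, ?_, ?_⟩
      · rcases hsupp2 u hu with rfl | rfl <;> rcases hsupp2 w hw with rfl | rfl
        · exact Relation.ReflTransGen.refl
        · exact Relation.ReflTransGen.single hadj
        · exact Relation.ReflTransGen.single (G.adjIn_symm hadj)
        · exact Relation.ReflTransGen.refl
      · rw [degIn_eq_sum_cnt, Finset.sum_singleton, hcnta]
      · rw [degIn_eq_sum_cnt, Finset.sum_singleton, hcntb]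
      · intro u hu h1 h2
        rcases hsupp2 u hu with rfl | rfl
        · exact absurd rfl h1
        · exact absurd rfl h2

end Multigraph
namespace Multigraph

variable {G : Multigraph} {S : Finset G.V}

lemma type1_supp {f : G.E} (h : ¬∃ u ∈ G.ends f, u ∉ S) :
    ∀ u ∈ G.supp (G.pieceOf S f), u ∈ S := by
  push_neg at h
  intro u hu
  rw [pieceOf, dif_neg (by push_neg; exact h)] at hu
  obtain ⟨e, he, hue⟩ := mem_supp_iff.1 hu
  rw [Finset.mem_singleton] at he
  subst he
  exact h u hue

lemma piece_eq_of_comm {f g : G.E} (hF : ∃ u ∈ G.ends f, u ∉ S)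
    (hG : ∃ u ∈ G.ends g, u ∉ S) {u : G.V}
    (hu1 : u ∈ G.compVerts (G.YS S) hF.choose)
    (hu2 : u ∈ G.compVerts (G.YS S) hG.choose) :
    G.pieceOf S f = G.pieceOf S g := by
  have hcv : G.compVerts (G.YS S) hF.choose = G.compVerts (G.YS S) hG.choose :=
    (G.compVerts_congr (mem_compVerts.1 hu1)).trans
      (G.compVerts_congr (mem_compVerts.1 hu2)).symm
  rw [pieceOf, pieceOf, dif_pos hF, dif_pos hG, hcv, G.compEdges_congr hcv]

lemma piece_disj {f g : G.E} (hf : f ∈ G.AS S) (hg : g ∈ G.AS S)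
    (hne : G.pieceOf S f ≠ G.pieceOf S g) :
    Disjoint (G.pieceOf S f) (G.pieceOf S g) ∧
    ∀ u, u ∈ G.supp (G.pieceOf S f) → u ∈ G.supp (G.pieceOf S g) → u ∈ S := by
  by_cases hF : ∃ u ∈ G.ends f, u ∉ S
  · by_cases hG : ∃ u ∈ G.ends g, u ∉ S
    · -- both genuine component pieces
      have hvfS : hF.choose ∉ S := hF.choose_spec.2
      have hvgS : hG.choose ∉ S := hG.choose_spec.2
      have hcc : ∀ u : G.V, u ∈ G.compVerts (G.YS S) hF.choose →
          u ∈ G.compVerts (G.YS S) hG.choose → False := by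
        intro u h1 h2
        exact hne (piece_eq_of_comm hF hG h1 h2)
      constructor
      · rw [Finset.disjoint_left]
        intro e he1 he2
        rw [pieceOf, dif_pos hF, Finset.mem_union] at he1
        rw [pieceOf, dif_pos hG, Finset.mem_union] at he2
        rcases he1 with he1 | he1 <;> rcases he2 with he2 | he2
        · obtain ⟨a, b, hab⟩ := G.ends_rep e
          have hae : a ∈ G.ends e := by rw [hab]; exact Sym2.mem_mk_left a b
          exact hcc a (G.ends_subset_compVerts he1 a hae)
            (G.ends_subset_compVerts he2 a hae)
        · exact Finset.disjoint_left.1 AS_disj_YS (mem_slotE.1 he2).1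
            (Finset.filter_subset _ _ he1)
        · exact Finset.disjoint_left.1 AS_disj_YS (mem_slotE.1 he1).1
            (Finset.filter_subset _ _ he2)
        · obtain ⟨heA, a, ha, haW⟩ := mem_slotE.1 he1
          obtain ⟨_, b, hb, hbW⟩ := mem_slotE.1 he2
          have haS : a ∉ S := G.not_mem_S_of_mem_compVerts hvfS haW
          have hbS : b ∉ S := G.not_mem_S_of_mem_compVerts hvgS hbW
          by_cases hab : a = b
          · exact hcc a haW (hab ▸ hbW)
          · obtain ⟨s0, hs0, hs0S⟩ := mem_AS.1 heA
            rw [sym2_eq ha hb hab, Sym2.mem_iff] at hs0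
            rcases hs0 with rfl | rfl
            · exact haS hs0S
            · exact hbS hs0S
      · intro u hu1 hu2
        by_contra huS
        rw [pieceOf, dif_pos hF] at hu1
        rw [pieceOf, dif_pos hG] at hu2
        exact hcc u (G.mem_W_of_mem_supp_piece hvfS huS hu1)
          (G.mem_W_of_mem_supp_piece hvgS huS hu2)
    · -- g is a single terminal edge
      refine ⟨?_, fun u _ hu => type1_supp hG u hu⟩
      rw [Finset.disjoint_right]
      intro e he2 he1
      rw [pieceOf, dif_neg hG, Finset.mem_singleton] at he2
      subst he2
      rw [pieceOf, dif_pos hF, Finset.mem_union] at he1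
      push_neg at hG
      rcases he1 with he1 | he1
      · obtain ⟨heY, _⟩ := mem_compEdges.1 he1
        obtain ⟨s0, hs0, hs0S⟩ := mem_AS.1 hg
        exact mem_YS.1 heY s0 hs0 hs0S
      · obtain ⟨_, w, hw, hwW⟩ := mem_slotE.1 he1
        exact G.not_mem_S_of_mem_compVerts hF.choose_spec.2 hwW (hG w hw)
  · -- f is a single terminal edge
    refine ⟨?_, fun u hu _ => type1_supp hF u hu⟩
    rw [Finset.disjoint_left]
    intro e he1 he2
    rw [pieceOf, dif_neg hF, Finset.mem_singleton] at he1
    subst he1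
    push_neg at hF
    by_cases hG : ∃ u ∈ G.ends g, u ∉ S
    · rw [pieceOf, dif_pos hG, Finset.mem_union] at he2
      rcases he2 with he2 | he2
      · obtain ⟨heY, _⟩ := mem_compEdges.1 he2
        obtain ⟨s0, hs0, hs0S⟩ := mem_AS.1 hf
        exact mem_YS.1 heY s0 hs0 hs0S
      · obtain ⟨_, w, hw, hwW⟩ := mem_slotE.1 he2
        exact G.not_mem_S_of_mem_compVerts hG.choose_spec.2 hwW (hF w hw)
    · rw [pieceOf, dif_neg hG, Finset.mem_singleton] at he2
      subst he2
      exact hne rfl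

lemma PS_disj (hconn : ∀ u v : G.V, G.reachIn Finset.univ u v)
    (hdeg : ∀ u : G.V, u ∉ S → G.degIn Finset.univ u = 2) (hS : S.Nonempty) :
    ∀ Q ∈ (G.AS S).image (G.pieceOf S), ∀ Q' ∈ (G.AS S).image (G.pieceOf S),
      Q ≠ Q' → Disjoint Q Q' ∧
        ∀ u, u ∈ G.supp Q → u ∈ G.supp Q' → u ∈ S := by
  intro Q hQ Q' hQ' hne
  obtain ⟨f, hf, rfl⟩ := Finset.mem_image.1 hQ
  obtain ⟨g, hg, rfl⟩ := Finset.mem_image.1 hQ'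
  exact piece_disj hf hg hne

lemma PS_biUnion (hconn : ∀ u v : G.V, G.reachIn Finset.univ u v)
    (hdeg : ∀ u : G.V, u ∉ S → G.degIn Finset.univ u = 2) (hS : S.Nonempty) :
    (Finset.univ : Finset G.E) = ((G.AS S).image (G.pieceOf S)).biUnion id := by
  ext e
  simp only [Finset.mem_univ, true_iff, Finset.mem_biUnion, Finset.mem_image, id]
  obtain ⟨f, hf, he⟩ := piece_cover hconn hdeg hS e
  exact ⟨G.pieceOf S f, ⟨f, hf, rfl⟩, he⟩

lemma PS_deg (hconn : ∀ u v : G.V, G.reachIn Finset.univ u v)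
    (hdeg : ∀ u : G.V, u ∉ S → G.degIn Finset.univ u = 2) (hS : S.Nonempty)
    (w : G.V) : G.degIn Finset.univ w
      = ∑ Q ∈ (G.AS S).image (G.pieceOf S), G.degIn Q w := by
  have hdisj : ((((G.AS S).image (G.pieceOf S)) : Finset (Finset G.E))
      : Set (Finset G.E)).PairwiseDisjoint id := by
    intro Q hQ Q' hQ' hne
    rw [Finset.mem_coe] at hQ hQ'
    exact (PS_disj hconn hdeg hS Q hQ Q' hQ' hne).1
  conv_lhs => rw [degIn_eq_sum_cnt, PS_biUnion hconn hdeg hS]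
  rw [Finset.sum_biUnion hdisj]
  rfl

lemma IsPathSet_symm {P : Finset G.E} {x y : G.V} (h : G.IsPathSet P x y) :
    G.IsPathSet P y x :=
  ⟨h.1, h.2.1.symm, h.2.2.2.1, h.2.2.1, h.2.2.2.2.2.1, h.2.2.2.2.1,
    fun v hv h1 h2 => h.2.2.2.2.2.2 v hv h2 h1⟩

lemma ASM_theta (hiso : G.NoIso) {x y : G.V} {P1 P2 P3 : Finset G.E}
    (h1 : G.IsPathSet P1 x y) (h2 : G.IsPathSet P2 x y) (h3 : G.IsPathSet P3 x y)
    (hd12 : Disjoint P1 P2) (hd13 : Disjoint P1 P3) (hd23 : Disjoint P2 P3)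
    (hs12 : ∀ u, u ∈ G.supp P1 → u ∈ G.supp P2 → u ∈ ({x, y} : Finset G.V))
    (hs13 : ∀ u, u ∈ G.supp P1 → u ∈ G.supp P3 → u ∈ ({x, y} : Finset G.V))
    (hs23 : ∀ u, u ∈ G.supp P2 → u ∈ G.supp P3 → u ∈ ({x, y} : Finset G.V))
    (hcov : ∀ e, e ∈ P1 ∨ e ∈ P2 ∨ e ∈ P3) : G.IsTheta := by
  have hint : ∀ (A B : Finset G.E), G.IsPathSet A x y → G.IsPathSet B x y →
      (∀ u, u ∈ G.supp A → u ∈ G.supp B → u ∈ ({x, y} : Finset G.V)) →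
      G.supp A ∩ G.supp B = {x, y} := by
    intro A B hA hB hs
    ext u
    rw [Finset.mem_inter]
    constructor
    · rintro ⟨hu1, hu2⟩
      exact hs u hu1 hu2
    · intro hu
      rw [Finset.mem_insert, Finset.mem_singleton] at hu
      rcases hu with rfl | rfl
      · exact ⟨hA.2.2.1, hB.2.2.1⟩
      · exact ⟨hA.2.2.2.1, hB.2.2.2.1⟩
  refine ⟨hiso, x, y, P1, P2, P3, h1, h2, h3, ?_, hd12, hd13, hd23,
    hint P1 P2 h1 h2 hs12, hint P1 P3 h1 h3 hs13, hint P2 P3 h2 h3 hs23⟩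
  ext e
  simp only [Finset.mem_union, Finset.mem_univ, iff_true]
  rcases hcov e with h | h | h <;> tauto

lemma ASM_dumbbell (hiso : G.NoIso) {x y : G.V} (hxy : x ≠ y)
    {C1 C2 P : Finset G.E}
    (hc1 : G.IsCycleSet C1) (hxc1 : x ∈ G.supp C1) (hyc1 : y ∉ G.supp C1)
    (hc2 : G.IsCycleSet C2) (hxc2 : x ∉ G.supp C2) (hyc2 : y ∈ G.supp C2)
    (hp : G.IsPathSet P x y)
    (hd12 : Disjoint C1 C2) (hd1p : Disjoint C1 P) (hd2p : Disjoint C2 P)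
    (hs12 : ∀ u, u ∈ G.supp C1 → u ∈ G.supp C2 → u ∈ ({x, y} : Finset G.V))
    (hs1p : ∀ u, u ∈ G.supp C1 → u ∈ G.supp P → u ∈ ({x, y} : Finset G.V))
    (hs2p : ∀ u, u ∈ G.supp C2 → u ∈ G.supp P → u ∈ ({x, y} : Finset G.V))
    (hcov : ∀ e, e ∈ C1 ∨ e ∈ C2 ∨ e ∈ P) : G.IsDumbbell := by
  refine ⟨hiso, C1, C2, P, x, y, hc1, hc2, hp, hd12, hd1p, hd2p, ?_, ?_, ?_, ?_⟩
  · ext e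
    simp only [Finset.mem_union, Finset.mem_univ, iff_true]
    rcases hcov e with h | h | h <;> tauto
  · ext u
    simp only [Finset.mem_inter, Finset.notMem_empty, iff_false, not_and]
    intro hu1 hu2
    have := hs12 u hu1 hu2
    rw [Finset.mem_insert, Finset.mem_singleton] at this
    rcases this with rfl | rfl
    · exact hxc2 hu2
    · exact hyc1 hu1
  · ext u
    rw [Finset.mem_inter, Finset.mem_singleton]
    constructor
    · rintro ⟨hu1, hu2⟩
      have := hs1p u hu1 hu2
      rw [Finset.mem_insert, Finset.mem_singleton] at this
      rcases this with rfl | rfl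
      · rfl
      · exact absurd hu1 hyc1
    · rintro rfl
      exact ⟨hxc1, hp.2.2.1⟩
  · ext u
    rw [Finset.mem_inter, Finset.mem_singleton]
    constructor
    · rintro ⟨hu1, hu2⟩
      have := hs2p u hu1 hu2
      rw [Finset.mem_insert, Finset.mem_singleton] at this
      rcases this with rfl | rfl
      · exact absurd hu1 hxc2
      · rfl
    · rintro rfl
      exact ⟨hyc2, hp.2.2.2.1⟩

end Multigraph
namespace Multigraph

variable {G : Multigraph}

lemma noiso_of_supp (hsupp : G.supp Finset.univ = Finset.univ) : G.NoIso := by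
  intro v
  have : v ∈ G.supp Finset.univ := by rw [hsupp]; exact Finset.mem_univ v
  obtain ⟨e, _, hv⟩ := mem_supp_iff.1 this
  exact ⟨e, hv⟩

/-- Case of a single vertex of degree 4: the graph is a butterfly. -/
lemma case_deg_four (hconn : ∀ u v : G.V, G.reachIn Finset.univ u v) {x : G.V}
    (hx4 : G.degIn Finset.univ x = 4)
    (hdeg : ∀ u : G.V, u ≠ x → G.degIn Finset.univ u = 2)
    (hsupp : G.supp Finset.univ = Finset.univ) : G.IsButterfly := by
  have hiso := G.noiso_of_supp hsupp
  set S : Finset G.V := {x} with hSdef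
  have hS : S.Nonempty := ⟨x, Finset.mem_singleton_self x⟩
  have hdeg' : ∀ u : G.V, u ∉ S → G.degIn Finset.univ u = 2 := by
    intro u hu
    exact hdeg u (fun h => hu (h ▸ Finset.mem_singleton_self x))
  set PS := (G.AS S).image (G.pieceOf S) with hPSdef
  have hQfact : ∀ Q ∈ PS, G.IsCycleSet Q ∧ G.degIn Q x = 2 ∧ x ∈ G.supp Q := by
    intro Q hQ
    rw [hPSdef] at hQ
    obtain ⟨f, hf, rfl⟩ := Finset.mem_image.1 hQ
    obtain ⟨sf, sg, hsf, hsg, hsfsupp, _, _, hcyc, _⟩ := piece_spec hconn hdeg' hS hf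
    rw [hSdef, Finset.mem_singleton] at hsf hsg
    subst hsf
    subst hsg
    obtain ⟨hc, hd⟩ := hcyc rfl
    exact ⟨hc, hd, hsfsupp⟩
  have hsum := PS_deg hconn hdeg' hS x
  rw [hx4, ← hPSdef] at hsum
  have hconst : ∑ Q ∈ PS, G.degIn Q x = 2 * PS.card := by
    rw [Finset.sum_congr rfl (fun Q hQ => (hQfact Q hQ).2.1), Finset.sum_const]
    simp [mul_comm]
  have hcard : PS.card = 2 := by omega
  obtain ⟨Q1, Q2, hQne, hPSeq⟩ := Finset.card_eq_two.1 hcard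
  have hQ1 : Q1 ∈ PS := by rw [hPSeq]; exact Finset.mem_insert_self _ _
  have hQ2 : Q2 ∈ PS := by
    rw [hPSeq]; exact Finset.mem_insert_of_mem (Finset.mem_singleton_self _)
  obtain ⟨hc1, hd1, hm1⟩ := hQfact Q1 hQ1
  obtain ⟨hc2, hd2, hm2⟩ := hQfact Q2 hQ2
  have hpair := PS_disj hconn hdeg' hS Q1 (hPSdef ▸ hQ1) Q2 (hPSdef ▸ hQ2) hQne
  refine ⟨hiso, Q1, Q2, x, hc1, hc2, hpair.1, ?_, ?_⟩
  · ext e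
    simp only [Finset.mem_union, Finset.mem_univ, iff_true]
    have hbi := PS_biUnion hconn hdeg' hS (S := S)
    have he : e ∈ ((G.AS S).image (G.pieceOf S)).biUnion id := by
      rw [← hbi]; exact Finset.mem_univ e
    obtain ⟨Q, hQm, heQ⟩ := Finset.mem_biUnion.1 he
    rw [← hPSdef, hPSeq, Finset.mem_insert, Finset.mem_singleton] at hQm
    rcases hQm with rfl | rfl
    · exact Or.inl heQ
    · exact Or.inr heQ
  · ext u
    rw [Finset.mem_inter, Finset.mem_singleton]
    constructor
    · rintro ⟨h1, h2⟩
      have := hpair.2 u h1 h2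
      rwa [hSdef, Finset.mem_singleton] at this
    · rintro rfl
      exact ⟨hm1, hm2⟩

set_option maxHeartbeats 3200000 in
/-- Case of two vertices of degree 3: theta graph or dumbbell. -/
lemma case_deg_three (hconn : ∀ u v : G.V, G.reachIn Finset.univ u v) {x y : G.V}
    (hxy : x ≠ y)
    (hx3 : G.degIn Finset.univ x = 3) (hy3 : G.degIn Finset.univ y = 3)
    (hdeg : ∀ u : G.V, u ≠ x → u ≠ y → G.degIn Finset.univ u = 2)
    (hsupp : G.supp Finset.univ = Finset.univ) : G.IsTheta ∨ G.IsDumbbell := by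
  have hiso := G.noiso_of_supp hsupp
  set S : Finset G.V := {x, y} with hSdef
  have hxS : x ∈ S := Finset.mem_insert_self x {y}
  have hyS : y ∈ S := Finset.mem_insert_of_mem (Finset.mem_singleton_self y)
  have hS : S.Nonempty := ⟨x, hxS⟩
  have hdeg' : ∀ u : G.V, u ∉ S → G.degIn Finset.univ u = 2 := by
    intro u hu
    rw [hSdef, Finset.mem_insert, Finset.mem_singleton] at hu
    push_neg at hu
    exact hdeg u hu.1 hu.2
  set PS := (G.AS S).image (G.pieceOf S) with hPSdef
  have hQfact : ∀ Q ∈ PS,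
      (G.IsCycleSet Q ∧ G.degIn Q x = 2 ∧ G.degIn Q y = 0 ∧ x ∈ G.supp Q ∧ y ∉ G.supp Q) ∨
      (G.IsCycleSet Q ∧ G.degIn Q x = 0 ∧ G.degIn Q y = 2 ∧ x ∉ G.supp Q ∧ y ∈ G.supp Q) ∨
      (G.IsPathSet Q x y ∧ G.degIn Q x = 1 ∧ G.degIn Q y = 1 ∧ x ∈ G.supp Q ∧ y ∈ G.supp Q) := by
    intro Q hQ
    rw [hPSdef] at hQ
    obtain ⟨f, hf, rfl⟩ := Finset.mem_image.1 hQ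
    obtain ⟨sf, sg, hsf, hsg, hm1, hm2, honly, hcyc, hpath⟩ := piece_spec hconn hdeg' hS hf
    rw [hSdef, Finset.mem_insert, Finset.mem_singleton] at hsf hsg
    rcases hsf with rfl | rfl
    · rcases hsg with rfl | rfl
      · left
        obtain ⟨hc, hd⟩ := hcyc rfl
        have hy : y ∉ G.supp (G.pieceOf S f) := by
          intro hys
          rcases honly y hyS hys with h | h <;> exact hxy h.symm
        exact ⟨hc, hd, G.degIn_eq_zero hy, hm1, hy⟩
      · right; right
        have hp := hpath hxy
        exact ⟨hp, hp.2.2.2.2.1, hp.2.2.2.2.2.1, hm1, hm2⟩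
    · rcases hsg with rfl | rfl
      · right; right
        have hp := IsPathSet_symm (hpath hxy.symm)
        exact ⟨hp, hp.2.2.2.2.1, hp.2.2.2.2.2.1, hp.2.2.1, hp.2.2.2.1⟩
      · right; left
        obtain ⟨hc, hd⟩ := hcyc rfl
        have hx' : x ∉ G.supp (G.pieceOf S f) := by
          intro hxs
          rcases honly x hxS hxs with h | h <;> exact hxy h
        exact ⟨hc, G.degIn_eq_zero hx', hd, hx', hm1⟩
  have hsumx := PS_deg hconn hdeg' hS x
  rw [hx3, ← hPSdef] at hsumx
  have hsumy := PS_deg hconn hdeg' hS y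
  rw [hy3, ← hPSdef] at hsumy
  have hQ2 : ∀ Q ∈ PS, G.degIn Q x + G.degIn Q y = 2 := by
    intro Q hQ
    rcases hQfact Q hQ with ⟨_, a, b, _⟩ | ⟨_, a, b, _⟩ | ⟨_, a, b, _⟩ <;> omega
  have hsum6 : ∑ Q ∈ PS, (G.degIn Q x + G.degIn Q y) = 2 * PS.card := by
    rw [Finset.sum_congr rfl hQ2, Finset.sum_const]
    simp [mul_comm]
  have hsplit : ∑ Q ∈ PS, (G.degIn Q x + G.degIn Q y)
      = ∑ Q ∈ PS, G.degIn Q x + ∑ Q ∈ PS, G.degIn Q y := Finset.sum_add_distrib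
  have hcard : PS.card = 3 := by omega
  obtain ⟨Q1, Q2, Q3, h12, h13, h23, hPSeq⟩ := Finset.card_eq_three.1 hcard
  have hQ1m : Q1 ∈ PS := by rw [hPSeq]; simp
  have hQ2m : Q2 ∈ PS := by rw [hPSeq]; simp
  have hQ3m : Q3 ∈ PS := by rw [hPSeq]; simp
  have hn1 : Q1 ∉ ({Q2, Q3} : Finset (Finset G.E)) := by simp [h12, h13]
  have hn2 : Q2 ∉ ({Q3} : Finset (Finset G.E)) := by simp [h23]
  have hsx : 3 = G.degIn Q1 x + (G.degIn Q2 x + G.degIn Q3 x) := by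
    rw [hPSeq] at hsumx
    rwa [Finset.sum_insert hn1, Finset.sum_insert hn2, Finset.sum_singleton] at hsumx
  have hsy : 3 = G.degIn Q1 y + (G.degIn Q2 y + G.degIn Q3 y) := by
    rw [hPSeq] at hsumy
    rwa [Finset.sum_insert hn1, Finset.sum_insert hn2, Finset.sum_singleton] at hsumy
  have hp12 := PS_disj hconn hdeg' hS Q1 (hPSdef ▸ hQ1m) Q2 (hPSdef ▸ hQ2m) h12
  have hp13 := PS_disj hconn hdeg' hS Q1 (hPSdef ▸ hQ1m) Q3 (hPSdef ▸ hQ3m) h13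
  have hp23 := PS_disj hconn hdeg' hS Q2 (hPSdef ▸ hQ2m) Q3 (hPSdef ▸ hQ3m) h23
  obtain ⟨hd12, hs12⟩ := hp12
  obtain ⟨hd13, hs13⟩ := hp13
  obtain ⟨hd23, hs23⟩ := hp23
  rw [hSdef] at hs12 hs13 hs23
  have cover3 : ∀ e : G.E, e ∈ Q1 ∨ e ∈ Q2 ∨ e ∈ Q3 := by
    intro e
    have hbi := PS_biUnion hconn hdeg' hS (S := S)
    have he : e ∈ ((G.AS S).image (G.pieceOf S)).biUnion id := by
      rw [← hbi]; exact Finset.mem_univ e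
    obtain ⟨Q, hQm, heQ⟩ := Finset.mem_biUnion.1 he
    rw [← hPSdef, hPSeq, Finset.mem_insert, Finset.mem_insert,
      Finset.mem_singleton] at hQm
    rcases hQm with rfl | rfl | rfl <;> tauto
  rcases hQfact Q1 hQ1m with ⟨c1, d1x, d1y, m1x, m1y⟩ | ⟨c1, d1x, d1y, m1x, m1y⟩ | ⟨c1, d1x, d1y, m1x, m1y⟩ <;>
    rcases hQfact Q2 hQ2m with ⟨c2, d2x, d2y, m2x, m2y⟩ | ⟨c2, d2x, d2y, m2x, m2y⟩ | ⟨c2, d2x, d2y, m2x, m2y⟩ <;>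
    rcases hQfact Q3 hQ3m with ⟨c3, d3x, d3y, m3x, m3y⟩ | ⟨c3, d3x, d3y, m3x, m3y⟩ | ⟨c3, d3x, d3y, m3x, m3y⟩ <;>
    first
      | omega
      | exact Or.inl (ASM_theta hiso c1 c2 c3 hd12 hd13 hd23 hs12 hs13 hs23 cover3)
      | exact Or.inr (ASM_dumbbell hiso hxy c1 m1x m1y c2 m2x m2y c3
          hd12 hd13 hd23 hs12 hs13 hs23 cover3)
      | exact Or.inr (ASM_dumbbell hiso hxy c1 m1x m1y c3 m3x m3y c2
          hd13 hd12 hd23.symm hs13 hs12 (fun u a b => hs23 u b a)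
          (fun e => by rcases cover3 e with h | h | h <;> tauto))
      | exact Or.inr (ASM_dumbbell hiso hxy c2 m2x m2y c1 m1x m1y c3
          hd12.symm hd23 hd13 (fun u a b => hs12 u b a) hs23 hs13
          (fun e => by rcases cover3 e with h | h | h <;> tauto))
      | exact Or.inr (ASM_dumbbell hiso hxy c2 m2x m2y c3 m3x m3y c1
          hd23 hd12.symm hd13.symm hs23 (fun u a b => hs12 u b a)
          (fun u a b => hs13 u b a)
          (fun e => by rcases cover3 e with h | h | h <;> tauto))
      | exact Or.inr (ASM_dumbbell hiso hxy c3 m3x m3y c1 m1x m1y c2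
          hd13.symm hd23.symm hd12 (fun u a b => hs13 u b a)
          (fun u a b => hs23 u b a) hs12
          (fun e => by rcases cover3 e with h | h | h <;> tauto))
      | exact Or.inr (ASM_dumbbell hiso hxy c3 m3x m3y c2 m2x m2y c1
          hd23.symm hd13.symm hd12.symm (fun u a b => hs23 u b a)
          (fun u a b => hs13 u b a) (fun u a b => hs12 u b a)
          (fun e => by rcases cover3 e with h | h | h <;> tauto))

/-- Forward direction of the classification. -/
lemma bicycle_classify (h : G.IsBicycle) :
    G.IsTheta ∨ G.IsDumbbell ∨ G.IsButterfly := by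
  obtain ⟨⟨hne, hconn⟩, hleaf, hdelta⟩ := h
  obtain ⟨v0⟩ := hne
  have hEV : Fintype.card G.E = Fintype.card G.V + 1 := by
    unfold deltaG at hdelta
    omega
  have hVpos : 0 < Fintype.card G.V := Fintype.card_pos_iff.2 ⟨v0⟩
  have hEpos : 0 < Fintype.card G.E := by omega
  obtain ⟨e0⟩ : Nonempty G.E := Fintype.card_pos_iff.1 hEpos
  obtain ⟨a, b, hab⟩ := G.ends_rep e0
  have ha : a ∈ G.supp Finset.univ :=
    mem_supp_iff.2 ⟨e0, Finset.mem_univ e0, by rw [hab]; exact Sym2.mem_mk_left a b⟩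
  have hsupp : G.supp Finset.univ = Finset.univ := by
    ext v
    simp only [Finset.mem_univ, iff_true]
    rcases (hconn v a).cases_head with rfl | ⟨c, hadj, _⟩
    · exact ha
    · obtain ⟨e, he, hends⟩ := hadj
      exact mem_supp_iff.2 ⟨e, he, by rw [hends]; exact Sym2.mem_mk_left _ _⟩
  have hdeg2 : ∀ v : G.V, 2 ≤ G.degIn Finset.univ v := by
    intro v
    have h1 : 1 ≤ G.degIn Finset.univ v :=
      G.one_le_degIn (by rw [hsupp]; exact Finset.mem_univ v)
    have h2 := hleaf v
    omega
  have hh := G.handshake Finset.univ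
  rw [hsupp] at hh
  have hcongr : ∀ v ∈ (Finset.univ : Finset G.V),
      G.degIn Finset.univ v = (G.degIn Finset.univ v - 2) + 2 := by
    intro v _
    have := hdeg2 v
    omega
  rw [Finset.sum_congr rfl hcongr, Finset.sum_add_distrib, Finset.sum_const,
    Finset.card_univ, Finset.card_univ, smul_eq_mul] at hh
  have hsum2 : ∑ v : G.V, (G.degIn Finset.univ v - 2) = 2 := by omega
  rcases sum_eq_two hsum2 with ⟨x, _, hx2, hrest⟩ | ⟨x, _, y, _, hxy, hx1, hy1, hrest⟩
  · right; right
    have hx4 : G.degIn Finset.univ x = 4 := by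
      have := hdeg2 x
      omega
    refine G.case_deg_four hconn hx4 ?_ hsupp
    intro u hu
    have := hrest u (Finset.mem_univ u) hu
    have := hdeg2 u
    omega
  · have hx3 : G.degIn Finset.univ x = 3 := by
      have := hdeg2 x
      omega
    have hy3 : G.degIn Finset.univ y = 3 := by
      have := hdeg2 y
      omega
    have hdeg : ∀ u : G.V, u ≠ x → u ≠ y → G.degIn Finset.univ u = 2 := by
      intro u h1 h2
      have := hrest u (Finset.mem_univ u) h1 h2
      have := hdeg2 u
      omega
    rcases G.case_deg_three hconn hxy hx3 hy3 hdeg hsupp with ht | hd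
    · exact Or.inl ht
    · exact Or.inr (Or.inl hd)

end Multigraph

/-- A graph is a bicycle iff it is a `Θ`-graph, a dumbbell, or a butterfly. -/
theorem stmt_7 (D : Multigraph) :
    D.IsBicycle ↔ (D.IsTheta ∨ D.IsDumbbell ∨ D.IsButterfly) := by
  constructor
  · exact Multigraph.bicycle_classify
  · rintro (h | h | h)
    · exact Multigraph.theta_bicycle h
    · exact Multigraph.dumbbell_bicycle h
    · exact Multigraph.butterfly_bicycle h
end
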